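/- arXiv:1105.2648 — 3 statements merged into one kernel-verified Lean document; each statement's English description precedes it below -/
import Mathlib

section
/- Let R and S be nonempty open connected subsets of the Riemann sphere ℂ∞, and assume that the set of nonconstant holomorphic maps from R to S is finite. Let X ⊆ ℂᵐ be a nonempty open connected set, and let F : R × X → S be a holomorphic map such that for some x₀ ∈ X the map R ∋ z ↦ F(z, x₀) is nonconstant. Then F is independent of X, i.e., F(z, x) = F(z, x′) for all z ∈ R and all x, x′ ∈ X. -/
open Set OnePoint
open scoped Classical

/-! We model the Riemann sphere `ℂ∞` as the one-point compactification `OnePoint ℂ` of `ℂ`,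
and define holomorphy of maps into (and between open subsets of) `OnePoint ℂ` by reading
the maps in the two standard charts: the identity chart on `ℂ` and the inversion chart
at `∞`. -/

/-- Reads a point of the Riemann sphere in the identity chart: `z ↦ z` on `ℂ`
(with junk value `0` at `∞`). -/
noncomputable def spDown : OnePoint ℂ → ℂ := fun z => OnePoint.elim z 0 id

/-- The inversion `z ↦ 1/z` of the Riemann sphere, interchanging `0` and `∞`. -/
noncomputable def spInv : OnePoint ℂ → OnePoint ℂ :=
  fun z => OnePoint.elim z ((0 : ℂ) : OnePoint ℂ)
    (fun w => if w = 0 then (∞ : OnePoint ℂ) else ((w⁻¹ : ℂ) : OnePoint ℂ))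

/-- A map `h` from a complex normed space into the Riemann sphere is holomorphic at `a` if it
is continuous at `a` and, read in the standard chart around the value `h a` (the identity
chart if `h a ≠ ∞`, the inversion chart if `h a = ∞`), it is analytic at `a`. -/
def SphHoloAt {E : Type*} [NormedAddCommGroup E] [NormedSpace ℂ E]
    (h : E → OnePoint ℂ) (a : E) : Prop :=
  ContinuousAt h a ∧
    ((h a ≠ ∞ ∧ AnalyticAt ℂ (fun z => spDown (h z)) a) ∨
      (h a = ∞ ∧ AnalyticAt ℂ (fun z => spDown (spInv (h z))) a))

/-- Holomorphy on a set, for maps from a complex normed space into the Riemann sphere. -/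
def SphHoloOn {E : Type*} [NormedAddCommGroup E] [NormedSpace ℂ E]
    (h : E → OnePoint ℂ) (U : Set E) : Prop :=
  ∀ a ∈ U, SphHoloAt h a

/-- The standard local parametrization of the Riemann sphere at `p`: the identity chart if
`p ≠ ∞` and the inversion chart if `p = ∞`; it maps `sphChartPt p` to `p`. -/
noncomputable def sphChart (p : OnePoint ℂ) : ℂ → OnePoint ℂ :=
  if p = ∞ then (fun z => spInv ((z : ℂ) : OnePoint ℂ)) else (fun z => ((z : ℂ) : OnePoint ℂ))

/-- The coordinate of `p` in the standard chart at `p`. -/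
noncomputable def sphChartPt (p : OnePoint ℂ) : ℂ := if p = ∞ then 0 else spDown p

/-- Holomorphy on a set `U`, for a map of one Riemann-sphere variable: at each `p ∈ U` the
map, read in the standard parametrization at `p`, is holomorphic at the coordinate of `p`. -/
def SphHoloOnS (f : OnePoint ℂ → OnePoint ℂ) (U : Set (OnePoint ℂ)) : Prop :=
  ∀ p ∈ U, SphHoloAt (fun z : ℂ => f (sphChart p z)) (sphChartPt p)

/-- Holomorphy on a set `U`, for a map of several Riemann-sphere variables: at each `p ∈ U`
the map, read in the product of the standard parametrizations at the coordinates of `p`, is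
holomorphic at the coordinates of `p`. -/
def SphHoloOnProd {n : ℕ} (f : (Fin n → OnePoint ℂ) → OnePoint ℂ)
    (U : Set (Fin n → OnePoint ℂ)) : Prop :=
  ∀ p ∈ U, SphHoloAt (fun z : Fin n → ℂ => f (fun i => sphChart (p i) (z i)))
      (fun i => sphChartPt (p i))

/-- Holomorphy for a map on a product `R × X`, where `R` is an open subset of the Riemann
sphere and `X` is an open subset of a complex normed space: at each point of `R × X` the map,
read in the standard parametrization of the sphere factor, is holomorphic. -/
def SphHoloOnMix {E : Type*} [NormedAddCommGroup E] [NormedSpace ℂ E]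
    (F : OnePoint ℂ × E → OnePoint ℂ) (R : Set (OnePoint ℂ)) (X : Set E) : Prop :=
  ∀ p ∈ R, ∀ x ∈ X,
    SphHoloAt (fun q : ℂ × E => F (sphChart p q.1, q.2)) (sphChartPt p, x)

lemma sphChart_pt (p : OnePoint ℂ) : sphChart p (sphChartPt p) = p := by
  by_cases hp : p = ∞
  · simp only [sphChart, sphChartPt, hp, spInv, if_pos]
    show (if (0:ℂ) = 0 then (∞ : OnePoint ℂ) else _) = ∞
    rw [if_pos rfl]
  · obtain ⟨w, rfl⟩ : ∃ w : ℂ, p = (w : OnePoint ℂ) := by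
      cases p with
      | infty => exact absurd rfl hp
      | coe w => exact ⟨w, rfl⟩
    simp only [sphChart, sphChartPt, hp, spDown, if_neg]
    rfl

/-- Slicing a sphere-holomorphic map of `ℂ × E` at a fixed second coordinate. -/
lemma sphHoloAt_slice {E : Type*} [NormedAddCommGroup E] [NormedSpace ℂ E]
    (G : ℂ × E → OnePoint ℂ) (a : ℂ) (x : E) (h : SphHoloAt G (a, x)) :
    SphHoloAt (fun z : ℂ => G (z, x)) a := by
  have hι : ContinuousAt (fun z : ℂ => ((z, x) : ℂ × E)) a :=
    (continuous_id.prodMk continuous_const).continuousAt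
  have hιa : AnalyticAt ℂ (fun z : ℂ => ((z, x) : ℂ × E)) a :=
    analyticAt_id.prod analyticAt_const
  have hc : ContinuousAt (G ∘ fun z : ℂ => ((z, x) : ℂ × E)) a :=
    ContinuousAt.comp (g := G) (f := fun z : ℂ => ((z, x) : ℂ × E)) h.1 hι
  refine ⟨hc, ?_⟩
  rcases h.2 with ⟨hne, han⟩ | ⟨heq, han⟩
  · refine Or.inl ⟨hne, ?_⟩
    have := AnalyticAt.comp (g := fun q => spDown (G q))
      (f := fun z : ℂ => ((z, x) : ℂ × E)) han hιa
    exact this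
  · refine Or.inr ⟨heq, ?_⟩
    have := AnalyticAt.comp (g := fun q => spDown (spInv (G q)))
      (f := fun z : ℂ => ((z, x) : ℂ × E)) han hιa
    exact this

/-- **Rigidity lemma (the paper's Lemma 3.2, with ambient surfaces `ℂ∞`).** Let `R, S` be
nonempty open connected subsets of the Riemann sphere such that the set of nonconstant
holomorphic maps from `R` to `S` is finite, let `X ⊆ ℂᵐ` be a nonempty open connected set,
and let `F : R × X → S` be holomorphic with `F(·, x₀)` nonconstant for some `x₀ ∈ X`.
Then `F` is independent of `X`. -/
theorem rigidity_lemma (m : ℕ) (R S : Set (OnePoint ℂ))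
    (hRo : IsOpen R) (hRc : IsConnected R)
    (hSo : IsOpen S) (hSc : IsConnected S)
    (hfin : {f : ↥R → OnePoint ℂ | ∃ g : OnePoint ℂ → OnePoint ℂ,
        SphHoloOnS g R ∧ MapsTo g R S ∧ (¬ ∃ c, ∀ z ∈ R, g z = c) ∧
        ∀ x : ↥R, f x = g x}.Finite)
    (X : Set (Fin m → ℂ)) (hXo : IsOpen X) (hXc : IsConnected X)
    (F : OnePoint ℂ × (Fin m → ℂ) → OnePoint ℂ)
    (hF : SphHoloOnMix F R X)
    (hmaps : ∀ z ∈ R, ∀ x ∈ X, F (z, x) ∈ S)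
    (x₀ : Fin m → ℂ) (hx₀ : x₀ ∈ X)
    (hnc : ¬ ∀ z ∈ R, ∀ w ∈ R, F (z, x₀) = F (w, x₀)) :
    ∀ z ∈ R, ∀ x ∈ X, ∀ x' ∈ X, F (z, x) = F (z, x') := by
  -- continuity of `x ↦ F (z, x)` on `X`, for each `z ∈ R`
  have hcont : ∀ z ∈ R, Continuous (fun x : ↥X => F (z, ↑x)) := by
    intro z hz
    rw [← continuousOn_univ]
    have : ContinuousOn (fun y : Fin m → ℂ => F (z, y)) X := by
      intro x hx
      have h := (hF z hz x hx).1
      have hι : ContinuousAt (fun y : Fin m → ℂ => ((sphChartPt z, y) : ℂ × (Fin m → ℂ))) x :=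
        (continuous_const.prodMk continuous_id).continuousAt
      have hcc : ContinuousAt ((fun q : ℂ × (Fin m → ℂ) => F (sphChart z q.1, q.2)) ∘
          fun y : Fin m → ℂ => ((sphChartPt z, y) : ℂ × (Fin m → ℂ))) x :=
        ContinuousAt.comp h hι
      have := hcc.continuousWithinAt (s := X)
      simpa only [Function.comp_def, sphChart_pt] using this
    intro x _
    exact ((this x x.2).comp continuous_subtype_val.continuousWithinAt (fun y _ => y.2))
  -- two separating points for the slice at `x₀`
  push_neg at hnc
  obtain ⟨z₁, hz₁, z₂, hz₂, hne⟩ := hnc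
  -- the finite set of restrictions of nonconstant holomorphic maps
  set Sfin : Set (↥R → OnePoint ℂ) :=
    {f : ↥R → OnePoint ℂ | ∃ g : OnePoint ℂ → OnePoint ℂ,
        SphHoloOnS g R ∧ MapsTo g R S ∧ (¬ ∃ c, ∀ z ∈ R, g z = c) ∧
        ∀ x : ↥R, f x = g x} with hSfin
  set f₀ : ↥R → OnePoint ℂ := fun z => F (↑z, x₀) with hf₀def
  -- membership of nonconstant slices in `Sfin`
  have hmem : ∀ x ∈ X, F (z₁, x) ≠ F (z₂, x) → (fun z : ↥R => F (↑z, x)) ∈ Sfin := by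
    intro x hx hnex
    refine ⟨fun z => F (z, x), ?_, fun z hz => hmaps z hz x hx, ?_, fun _ => rfl⟩
    · intro p hp
      exact sphHoloAt_slice _ _ _ (hF p hp x hx)
    · rintro ⟨c, hc⟩
      exact hnex ((hc z₁ hz₁).trans (hc z₂ hz₂).symm)
  -- witnesses separating `f₀` from each other member of `Sfin`
  have hRne : R.Nonempty := hRc.nonempty
  set T : Finset (↥R → OnePoint ℂ) := hfin.toFinset.erase f₀ with hT
  have hw : ∀ f : ↥R → OnePoint ℂ, ∃ w : ↥R, f ∈ T → f w ≠ f₀ w := by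
    intro f
    by_cases hfT : f ∈ T
    · by_contra h
      push_neg at h
      have : f = f₀ := by
        funext w
        exact (h w).2
      exact (Finset.mem_erase.mp hfT).1 this
    · exact ⟨⟨hRne.choose, hRne.choose_spec⟩, fun h => absurd h hfT⟩
  choose w hww using hw
  -- the clopen set
  set E : Set ↥X := {x : ↥X | ∀ z ∈ R, F (z, ↑x) = F (z, x₀)} with hE
  set U : Set ↥X := {x : ↥X | F (z₁, ↑x) ≠ F (z₂, ↑x) ∧
      ∀ f ∈ T, F (↑(w f), ↑x) ≠ f (w f)} with hU
  have hEU : E = U := by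
    apply Set.Subset.antisymm
    · intro x hxE
      constructor
      · rw [hxE z₁ hz₁, hxE z₂ hz₂]; exact hne
      · intro f hf
        rw [hxE (↑(w f)) (w f).2]
        exact fun h => hww f hf h.symm
    · intro x hxU
      intro z hz
      have hfx : (fun z : ↥R => F (↑z, ↑x)) ∈ Sfin := hmem ↑x x.2 hxU.1
      have hfx' : (fun z : ↥R => F (↑z, ↑x)) ∈ hfin.toFinset := hfin.mem_toFinset.mpr hfx
      by_cases heq : (fun z : ↥R => F (↑z, ↑x)) = f₀
      · exact congrFun heq ⟨z, hz⟩
      · have hmemT : (fun z : ↥R => F (↑z, ↑x)) ∈ T := Finset.mem_erase.mpr ⟨heq, hfx'⟩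
        exact absurd rfl (hxU.2 _ hmemT)
  have hUopen : IsOpen U := by
    have h1 : IsOpen {x : ↥X | F (z₁, ↑x) ≠ F (z₂, ↑x)} :=
      (isClosed_eq (hcont z₁ hz₁) (hcont z₂ hz₂)).isOpen_compl
    have h2 : IsOpen {x : ↥X | ∀ f ∈ T, F (↑(w f), ↑x) ≠ f (w f)} := by
      have : {x : ↥X | ∀ f ∈ T, F (↑(w f), ↑x) ≠ f (w f)} =
          ⋂ f ∈ T, {x : ↥X | F (↑(w f), ↑x) ≠ f (w f)} := by
        ext x; simp
      rw [this]
      exact isOpen_biInter_finset fun f _ =>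
        (isClosed_eq (hcont _ (w f).2) continuous_const).isOpen_compl
    exact (h1.inter h2)
  have hEclosed : IsClosed E := by
    have : E = ⋂ z ∈ R, {x : ↥X | F (z, ↑x) = F (z, x₀)} := by
      ext x; simp [hE]
    rw [this]
    exact isClosed_biInter fun z hz => isClosed_eq (hcont z hz) continuous_const
  have hclopen : IsClopen E := ⟨hEclosed, hEU ▸ hUopen⟩
  haveI : ConnectedSpace ↥X := Subtype.connectedSpace hXc
  have hEne : E.Nonempty := ⟨⟨x₀, hx₀⟩, fun z _ => rfl⟩
  have hEuniv : E = Set.univ := hclopen.eq_univ hEne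
  have key : ∀ x ∈ X, ∀ z ∈ R, F (z, x) = F (z, x₀) := by
    intro x hx z hz
    have : (⟨x, hx⟩ : ↥X) ∈ E := hEuniv ▸ Set.mem_univ _
    exact this z hz
  intro z hz x hx x' hx'
  rw [key x hx z hz, key x' hx' z hz]
end

section
/- Let D = D₁ × ⋯ × Dₙ and W = W₁ × ⋯ × Wₙ, where each D_j ⊆ ℂ is a nonempty open connected set such that ℂ ∖ D_j has nonempty interior, and each W_j ⊆ ℂ is a bounded nonempty open connected set. Let f = (f₁,…,fₙ) : D → W be a proper holomorphic map. Then there exist a permutation p of {1,…,n} and holomorphic maps g_j : D_{p(j)} → W_j such that f_j(z₁,…,zₙ) = g_j(z_{p(j)}) for every j and every (z₁,…,zₙ) ∈ D. -/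
open Set

namespace RS

open Metric Filter Function Topology Bornology

variable {n : ℕ}

local notation "E" => (Fin n → ℂ)

section Basics

variable {D : Fin n → Set ℂ}

lemma update_mem_pi {z : E} (hz : z ∈ univ.pi D) {l : Fin n} {w : ℂ} (hw : w ∈ D l) :
    Function.update z l w ∈ univ.pi D := by
  intro i _
  rcases eq_or_ne i l with rfl | h
  · simpa using hw
  · simpa [Function.update_apply, h] using hz i (mem_univ i)

lemma differentiable_update (l : Fin n) (x : E) :
    Differentiable ℂ (fun w : ℂ => Function.update x l w) := by
  rw [differentiable_pi]
  intro i
  rcases eq_or_ne i l with rfl | h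
  · simpa using differentiable_id
  · simpa [Function.update_apply, h] using differentiable_const (x i)

lemma differentiable_update_left (l : Fin n) (c : ℂ) :
    Differentiable ℂ (fun x : E => Function.update x l c) := by
  rw [differentiable_pi]
  intro i
  rcases eq_or_ne i l with rfl | h
  · simpa using differentiable_const c
  · simpa [Function.update_apply, h] using (differentiable_pi.mp differentiable_id i)

/-- slice of a differentiable map is 1-var differentiable -/
lemma slice_diffOn {F' : Type*} [NormedAddCommGroup F'] [NormedSpace ℂ F']
    {f : E → F'} (hf : DifferentiableOn ℂ f (univ.pi D))
    {x : E} (hx : x ∈ univ.pi D) (l : Fin n) :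
    DifferentiableOn ℂ (fun w => f (Function.update x l w)) (D l) := by
  apply hf.comp ((differentiable_update l x).differentiableOn)
  intro w hw
  exact update_mem_pi hx hw

end Basics

/-- custom compact exhaustion of an open subset of ℂ, monotone. -/
lemma exists_exhaustion (U : Set ℂ) (hU : IsOpen U) :
    ∃ Q : ℕ → Set ℂ, (∀ i, IsCompact (Q i) ∧ Q i ⊆ U) ∧ (∀ i j, i ≤ j → Q i ⊆ Q j) ∧
      ∀ C, IsCompact C → C ⊆ U → ∃ i, C ⊆ Q i := by
  by_cases hUc : Uᶜ = ∅
  · refine ⟨fun i => closedBall 0 i, fun i => ⟨isCompact_closedBall _ _, ?_⟩, ?_, ?_⟩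
    · intro x _; by_contra h; exact (eq_empty_iff_forall_notMem.mp hUc) x h
    · intro i j hij; exact closedBall_subset_closedBall (by exact_mod_cast hij)
    · intro C hC _
      obtain ⟨R, hR⟩ := hC.isBounded.subset_closedBall 0
      obtain ⟨i, hi⟩ := exists_nat_ge R
      exact ⟨i, hR.trans (closedBall_subset_closedBall hi)⟩
  · have hUcne : Uᶜ.Nonempty := nonempty_iff_ne_empty.mpr hUc
    refine ⟨fun i => closedBall 0 i ∩ {ζ | 1 / (i + 1 : ℝ) ≤ infDist ζ Uᶜ},
      fun i => ⟨?_, ?_⟩, ?_, ?_⟩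
    · apply (isCompact_closedBall _ _).inter_right
      exact isClosed_le continuous_const (continuous_infDist_pt _)
    · rintro ζ ⟨-, hζ⟩
      by_contra h
      have h0 : infDist ζ Uᶜ = 0 := infDist_zero_of_mem (by simpa using h)
      have hζ' : 1 / (i + 1 : ℝ) ≤ infDist ζ Uᶜ := hζ
      rw [h0] at hζ'
      have : (0:ℝ) < 1 / (i + 1 : ℝ) := by positivity
      linarith
    · intro i j hij
      apply inter_subset_inter
      · exact closedBall_subset_closedBall (by exact_mod_cast hij)
      · intro ζ hζ
        have hζ' : 1 / (i + 1 : ℝ) ≤ infDist ζ Uᶜ := hζ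
        have hij' : (i:ℝ) ≤ j := by exact_mod_cast hij
        have hle : 1 / (j + 1 : ℝ) ≤ 1 / (i + 1 : ℝ) :=
          one_div_le_one_div_of_le (by positivity) (by linarith)
        exact le_trans hle hζ'
    · intro C hC hCU
      rcases C.eq_empty_or_nonempty with rfl | hCne
      · exact ⟨0, empty_subset _⟩
      obtain ⟨R, hR⟩ := hC.isBounded.subset_closedBall 0
      have hpos : ∀ ζ ∈ C, 0 < infDist ζ Uᶜ := by
        intro ζ hζ
        rw [← hU.isClosed_compl.notMem_iff_infDist_pos hUcne]
        exact fun h => h (hCU hζ)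
      obtain ⟨ζ₀, hζ₀C, hζ₀⟩ := hC.exists_isMinOn hCne ((continuous_infDist_pt _).continuousOn)
      have hd0 : 0 < infDist ζ₀ Uᶜ := hpos ζ₀ hζ₀C
      obtain ⟨i₁, hi₁⟩ := exists_nat_gt (1 / infDist ζ₀ Uᶜ)
      obtain ⟨i₂, hi₂⟩ := exists_nat_ge R
      refine ⟨max i₁ i₂, fun ζ hζ => ⟨?_, ?_⟩⟩
      · refine closedBall_subset_closedBall ?_ (hR hζ)
        exact hi₂.trans (by exact_mod_cast le_max_right i₁ i₂)
      · have h1 : 1 / ((max i₁ i₂ : ℕ) + 1 : ℝ) ≤ 1 / (i₁ : ℝ) := by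
          apply one_div_le_one_div_of_le
          · have : (0:ℝ) < 1 / infDist ζ₀ Uᶜ := by positivity
            have : (0:ℝ) < i₁ := lt_trans this hi₁
            exact_mod_cast this
          · have : (i₁:ℝ) ≤ max i₁ i₂ := by exact_mod_cast le_max_left i₁ i₂
            linarith
        have hi₁pos : (0:ℝ) < i₁ := lt_trans (by positivity) hi₁
        have h2 : 1 / (i₁ : ℝ) ≤ infDist ζ₀ Uᶜ := by
          rw [div_lt_iff₀ hd0] at hi₁
          rw [div_le_iff₀ hi₁pos]
          nlinarith
        refine le_trans (h1.trans h2) ?_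
        exact hζ₀ hζ

/-- a holomorphic function on an open connected U ⊆ ℂ which is small outside compacts vanishes -/
lemma eq_zero_of_small_outside (U : Set ℂ) (hUo : IsOpen U) (hUc : IsPreconnected U)
    (u : ℂ → ℂ) (hu : DifferentiableOn ℂ u U)
    (hsmall : ∀ ε : ℝ, 0 < ε → ∃ Q, IsCompact Q ∧ Q ⊆ U ∧ ∀ ζ ∈ U \ Q, ‖u ζ‖ ≤ ε) :
    ∀ ζ ∈ U, u ζ = 0 := by
  by_contra h
  push_neg at h
  obtain ⟨ζ₀, hζ₀U, hζ₀⟩ := h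
  set ε := ‖u ζ₀‖ with hε
  have hεpos : 0 < ε := by simpa [hε] using hζ₀
  obtain ⟨Q, hQc, hQU, hQ⟩ := hsmall (ε/2) (by positivity)
  -- the set where ‖u‖ ≥ ε is compact and nonempty
  set S := {ζ ∈ Q | ε ≤ ‖u ζ‖} with hS
  have hcont : ContinuousOn u U := hu.continuousOn
  have hScl : IsClosed S :=
    (hcont.mono hQU).preimage_isClosed_of_isClosed hQc.isClosed
      (isClosed_le continuous_const continuous_norm)
  have hScomp : IsCompact S := hQc.of_isClosed_subset hScl (sep_subset _ _)
  have hζ₀S : ζ₀ ∈ S := by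
    refine ⟨?_, le_refl _⟩
    by_contra hq
    have := hQ ζ₀ ⟨hζ₀U, hq⟩
    linarith
  obtain ⟨ζs, hζsS, hmax⟩ := hScomp.exists_isMaxOn ⟨ζ₀, hζ₀S⟩
    ((hcont.mono hQU).norm.mono (sep_subset _ _))
  have hζsU : U ∈ {V | ζs ∈ V} := hQU hζsS.1
  have hεs : ε ≤ ‖u ζs‖ := hζsS.2
  have hmaxU : IsMaxOn (norm ∘ u) U ζs := by
    intro ζ hζ
    by_cases hc : ε ≤ ‖u ζ‖
    · exact hmax ⟨by_contra fun hq => by have := hQ ζ ⟨hζ, hq⟩; linarith, hc⟩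
    · push_neg at hc
      simp only [mem_setOf_eq, Function.comp]
      exact le_trans hc.le (le_trans hεs (le_refl _))
  have heq := Complex.eqOn_of_isPreconnected_of_isMaxOn_norm hUc hUo hu (hQU hζsS.1) hmaxU
  -- find a point of U outside Q
  have hUQ : (U \ Q).Nonempty := by
    by_contra hq
    rw [not_nonempty_iff_eq_empty, diff_eq_empty] at hq
    have hUQeq : U = Q := le_antisymm hq hQU
    have hUcomp : IsCompact U := hUQeq ▸ hQc
    have huniv : U = univ := by
      have : IsClopen U := ⟨hUcomp.isClosed, hUo⟩
      exact this.eq_univ ⟨ζ₀, hζ₀U⟩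
    have : IsCompact (univ : Set ℂ) := huniv ▸ hUcomp
    obtain ⟨R, hR⟩ := this.isBounded.subset_closedBall 0
    have := hR (mem_univ ((‖(R:ℂ)‖ + 1 : ℝ) : ℂ))
    rw [mem_closedBall] at this
    simp only [Complex.dist_eq, sub_zero] at this
    have hnn : (0:ℝ) ≤ ‖(R:ℂ)‖ := norm_nonneg _
    have habs : ‖(((‖(R:ℂ)‖ + 1 : ℝ)) : ℂ)‖ = ‖(R:ℂ)‖ + 1 := by
      rw [Complex.norm_real, Real.norm_eq_abs]
      exact abs_of_nonneg (by linarith)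
    rw [habs] at this
    have : R ≤ ‖(R:ℂ)‖ := by
      calc R ≤ ‖(R:ℂ)‖ := by
              simpa using le_abs_self R
        _ = ‖(R:ℂ)‖ := rfl
    linarith [this]
  obtain ⟨x, hxU, hxQ⟩ := hUQ
  have h1 := heq hxU
  have h2 := hQ x ⟨hxU, hxQ⟩
  rw [h1] at h2
  simp only [Function.const_apply] at h2
  linarith

section Ident

variable {D : Fin n → Set ℂ}

/-- slab induction: a slicewise-holomorphic function vanishing on a ball vanishes on all of
the product domain. -/
lemma eq_zero_of_zero_on_ball (hDo : ∀ i, IsOpen (D i)) (hDc : ∀ i, IsConnected (D i))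
    (G : E → ℂ)
    (hGs : ∀ x ∈ univ.pi D, ∀ i, DifferentiableOn ℂ (fun w => G (Function.update x i w)) (D i))
    (z₀ : E) (hz₀ : z₀ ∈ univ.pi D) (δ : ℝ) (hδ : 0 < δ) (hball : ball z₀ δ ⊆ univ.pi D)
    (h0 : ∀ z ∈ ball z₀ δ, G z = 0) : ∀ z ∈ univ.pi D, G z = 0 := by
  suffices H : ∀ S : Finset (Fin n), ∀ z ∈ univ.pi D,
      (∀ i, i ∉ S → dist (z i) (z₀ i) < δ) → G z = 0 by
    intro z hz
    exact H Finset.univ z hz (fun i hi => absurd (Finset.mem_univ i) hi)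
  have hball_i : ∀ i, ball (z₀ i) δ ⊆ D i := by
    intro i ζ hζ
    have hmem : Function.update z₀ i ζ ∈ univ.pi D := by
      apply hball
      rw [mem_ball, dist_pi_lt_iff hδ]
      intro j
      rcases eq_or_ne j i with rfl | hj
      · simpa using hζ
      · simp [Function.update_apply, hj, hδ]
    simpa using hmem i (mem_univ i)
  intro S
  induction S using Finset.induction_on with
  | empty =>
    intro z hz hcoord
    apply h0 z
    rw [mem_ball, dist_pi_lt_iff hδ]
    exact fun i => hcoord i (by simp)
  | @insert i S hiS IH =>
    intro z hz hcoord
    have hu : DifferentiableOn ℂ (fun w => G (Function.update z i w)) (D i) := hGs z hz i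
    have huz : ∀ ζ ∈ ball (z₀ i) δ, G (Function.update z i ζ) = 0 := by
      intro ζ hζ
      apply IH (Function.update z i ζ) (update_mem_pi hz (hball_i i hζ))
      intro j hj
      rcases eq_or_ne j i with rfl | hne
      · simpa using mem_ball.mp hζ
      · rw [Function.update_apply, if_neg hne]
        exact hcoord j (by simp [hj, hne])
    have hanal : AnalyticOnNhd ℂ (fun w => G (Function.update z i w)) (D i) :=
      hu.analyticOnNhd (hDo i)
    have hzero : EqOn (fun w => G (Function.update z i w)) 0 (D i) := by
      apply hanal.eqOn_zero_of_preconnected_of_eventuallyEq_zero (hDc i).isPreconnected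
        (hz₀ i (mem_univ i))
      filter_upwards [ball_mem_nhds (z₀ i) hδ] with w hw using huz w hw
    have := hzero (hz i (mem_univ i))
    simpa [Function.update_eq_self] using this

/-- Baire category: from a finite closed cover of a closed ball, one member contains a ball. -/
lemma exists_ball_P {J : Type*} [Fintype J] [Nonempty J] {P : J → E → Prop}
    (a : E) (r : ℝ) (hr : 0 < r)
    (hcl : ∀ j, IsClosed (closedBall a r ∩ {x | P j x}))
    (hcov : ∀ x ∈ closedBall a r, ∃ j, P j x) :
    ∃ j y δ, 0 < δ ∧ ball y δ ⊆ closedBall a r ∧ ∀ x ∈ ball y δ, P j x := by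
  haveI : CompleteSpace (closedBall a r) := (Metric.isClosed_closedBall (x := a) (ε := r)).completeSpace_coe
  haveI : Nonempty (closedBall a r) := ⟨⟨a, mem_closedBall_self hr.le⟩⟩
  set A : J → Set (closedBall a r) := fun j => Subtype.val ⁻¹' (closedBall a r ∩ {x | P j x})
  have hAcl : ∀ j, IsClosed (A j) := fun j => (hcl j).preimage continuous_subtype_val
  have hAcov : ⋃ j, A j = univ := by
    apply eq_univ_of_forall
    intro x
    obtain ⟨j, hj⟩ := hcov x.val x.2
    exact mem_iUnion.mpr ⟨j, ⟨x.2, hj⟩⟩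
  obtain ⟨j, hj⟩ := nonempty_interior_of_iUnion_of_closed hAcl hAcov
  obtain ⟨xt, hxt⟩ := hj
  rw [mem_interior_iff_mem_nhds, Metric.mem_nhds_iff] at hxt
  obtain ⟨ε, hε, hballε⟩ := hxt
  set t : ℝ := min 1 (ε / (2 * (r + 1))) with ht
  have htpos : 0 < t := lt_min one_pos (by positivity)
  have ht1 : t ≤ 1 := min_le_left _ _
  have htε : t * (2 * r) < ε := by
    have h1 : t ≤ ε / (2 * (r + 1)) := min_le_right _ _
    have h2 : t * (2 * r) ≤ (ε / (2 * (r + 1))) * (2 * r) := by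
      apply mul_le_mul_of_nonneg_right h1 (by positivity)
    have h3 : (ε / (2 * (r + 1))) * (2 * r) < ε := by
      rw [div_mul_eq_mul_div, div_lt_iff₀ (by positivity)]
      nlinarith
    linarith
  set y : E := xt.val + t • (a - xt.val) with hy
  have hxta : dist xt.val a ≤ r := mem_closedBall.mp xt.2
  refine ⟨j, y, t * r, by positivity, ?_, ?_⟩
  · intro u hu
    rw [mem_ball] at hu
    have hya : dist y a ≤ (1 - t) * r := by
      have : y - a = (1 - t) • (xt.val - a) := by
        rw [hy]; module
      rw [dist_eq_norm, this, norm_smul]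
      simp only [Real.norm_eq_abs, abs_of_nonneg (by linarith : (0:ℝ) ≤ 1 - t)]
      calc (1-t) * ‖xt.val - a‖ ≤ (1-t) * r := by
            apply mul_le_mul_of_nonneg_left _ (by linarith)
            rw [← dist_eq_norm]; exact hxta
        _ = (1-t) * r := rfl
    rw [mem_closedBall]
    calc dist u a ≤ dist u y + dist y a := dist_triangle _ _ _
      _ ≤ t * r + (1 - t) * r := by linarith
      _ = r := by ring
  · intro u hu
    rw [mem_ball] at hu
    have hucb : u ∈ closedBall a r := by
      rw [mem_closedBall]
      have hya : dist y a ≤ (1 - t) * r := by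
        have : y - a = (1 - t) • (xt.val - a) := by rw [hy]; module
        rw [dist_eq_norm, this, norm_smul]
        simp only [Real.norm_eq_abs, abs_of_nonneg (by linarith : (0:ℝ) ≤ 1 - t)]
        apply mul_le_mul_of_nonneg_left _ (by linarith)
        rw [← dist_eq_norm]; exact hxta
      calc dist u a ≤ dist u y + dist y a := dist_triangle _ _ _
        _ ≤ t * r + (1 - t) * r := by linarith
        _ = r := by ring
    have huxt : dist u xt.val < ε := by
      have hyxt : dist y xt.val ≤ t * r := by
        have : y - xt.val = t • (a - xt.val) := by rw [hy]; module
        rw [dist_eq_norm, this, norm_smul]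
        simp only [Real.norm_eq_abs, abs_of_nonneg htpos.le]
        apply mul_le_mul_of_nonneg_left _ htpos.le
        rw [← dist_eq_norm, dist_comm]; exact hxta
      calc dist u xt.val ≤ dist u y + dist y xt.val := dist_triangle _ _ _
        _ < t * r + t * r := by linarith
        _ = t * (2 * r) := by ring
        _ < ε := htε
    have : (⟨u, hucb⟩ : closedBall a r) ∈ Metric.ball xt ε := by
      rw [mem_ball, Subtype.dist_eq]
      exact huxt
    exact (hballε this).2

/-- if a finite product of continuous slice-holomorphic functions vanishes identically on the
product domain, some factor vanishes identically. -/
lemma factor_vanishes {J : Type*} [Fintype J] [Nonempty J]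
    (hDo : ∀ i, IsOpen (D i)) (hDc : ∀ i, IsConnected (D i))
    (a : E) (ha : a ∈ univ.pi D)
    (G : J → E → ℂ) (hGc : ∀ j, ContinuousOn (G j) (univ.pi D))
    (hGs : ∀ j, ∀ x ∈ univ.pi D, ∀ i,
      DifferentiableOn ℂ (fun w => G j (Function.update x i w)) (D i))
    (hprod : ∀ z ∈ univ.pi D, (∏ j, G j z) = 0) :
    ∃ j, ∀ z ∈ univ.pi D, G j z = 0 := by
  have hXo : IsOpen (univ.pi D) := isOpen_set_pi finite_univ (fun i _ => hDo i)
  obtain ⟨ε, hε, hball⟩ := Metric.isOpen_iff.mp hXo a ha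
  have hcb : closedBall a (ε/2) ⊆ univ.pi D :=
    (closedBall_subset_ball (by linarith)).trans hball
  obtain ⟨j, y, δ, hδ, hbsub, hP⟩ := exists_ball_P (P := fun j x => G j x = 0) a (ε/2)
    (by positivity)
    (fun j => by
      have := ((hGc j).mono hcb).preimage_isClosed_of_isClosed Metric.isClosed_closedBall
        (isClosed_singleton (x := (0:ℂ)))
      exact this)
    (fun x hx => by
      have := hprod x (hcb hx)
      exact Finset.prod_eq_zero_iff.mp this |>.imp (fun j hj => hj.2))
  have hyX : y ∈ univ.pi D := hcb (hbsub (mem_ball_self hδ))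
  refine ⟨j, eq_zero_of_zero_on_ball hDo hDc (G j) (hGs j) y hyX δ hδ
    (fun z hz => hcb (hbsub hz)) (fun z hz => hP z hz)⟩

end Ident

section Montel

variable {D : Fin n → Set ℂ} {J : Type*} [Fintype J]

lemma fderiv_bound {g : E → (J → ℂ)} {U : Set E} (hU : IsOpen U) (hg : DifferentiableOn ℂ g U)
    {M r : ℝ} (hM : ∀ x ∈ U, ‖g x‖ ≤ M) {x : E} (hx2 : closedBall x (2*r) ⊆ U) (hr : 0 < r)
    {u : E} (hu : u ∈ ball x r) : ‖fderiv ℂ g u‖ ≤ M / r := by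
  have hball2 : ball x (2*r) ⊆ U := ball_subset_closedBall.trans hx2
  have huU : u ∈ ball x (2*r) := ball_subset_ball (by linarith) hu
  have hM0 : 0 ≤ M := le_trans (norm_nonneg _) (hM u (hball2 huU))
  apply ContinuousLinearMap.opNorm_le_bound _ (by positivity)
  intro v
  rcases eq_or_ne v 0 with rfl | hv
  · simp
  have hvn : 0 < ‖v‖ := norm_pos_iff.mpr hv
  set R := r / ‖v‖ with hR
  have hRpos : 0 < R := by positivity
  set ψ : ℂ → (J → ℂ) := fun t => g (u + t • v) with hψ
  have hmem : ∀ t : ℂ, ‖t‖ ≤ R → u + t • v ∈ ball x (2*r) := by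
    intro t ht
    rw [mem_ball] at hu ⊢
    calc dist (u + t • v) x ≤ dist (u + t • v) u + dist u x := dist_triangle _ _ _
      _ < r + r := by
          apply add_lt_add_of_le_of_lt _ hu
          rw [dist_eq_norm, add_sub_cancel_left, norm_smul]
          calc ‖t‖ * ‖v‖ ≤ R * ‖v‖ := by
                exact mul_le_mul_of_nonneg_right ht hvn.le
            _ = r := by rw [hR]; field_simp
      _ = 2*r := by ring
  have haff : Differentiable ℂ (fun t : ℂ => u + t • v) :=
    (differentiable_id.smul_const v).const_add u
  have hψd : DifferentiableOn ℂ ψ (closedBall 0 R) := by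
    apply hg.comp haff.differentiableOn
    intro t ht
    rw [mem_closedBall, dist_zero_right] at ht
    exact hball2 (hmem t ht)
  have hψcl : DiffContOnCl ℂ ψ (ball 0 R) := by
    apply DifferentiableOn.diffContOnCl
    rwa [closure_ball (0:ℂ) hRpos.ne']
  have hsph : ∀ t ∈ sphere (0:ℂ) R, ‖ψ t‖ ≤ M := by
    intro t ht
    rw [mem_sphere, dist_zero_right] at ht
    exact hM _ (hball2 (hmem t ht.le))
  have hderiv := Complex.norm_deriv_le_of_forall_mem_sphere_norm_le hRpos hψcl hsph
  have hda : DifferentiableAt ℂ g u := hg.differentiableAt (hU.mem_nhds (hball2 huU))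
  have hchain : HasDerivAt ψ (fderiv ℂ g u v) 0 := by
    have h1 : HasDerivAt (fun t : ℂ => u + t • v) v 0 := by
      simpa using ((hasDerivAt_id (0:ℂ)).smul_const v).const_add u
    have h2 : HasFDerivAt g (fderiv ℂ g u) ((fun t : ℂ => u + t • v) 0) := by
      simpa using hda.hasFDerivAt
    have h3 := h2.comp_hasDerivAt 0 h1
    exact h3
  rw [← hchain.deriv]
  calc ‖deriv ψ 0‖ ≤ M / R := hderiv
    _ = M / r * ‖v‖ := by rw [hR]; field_simp

lemma lipschitz_on {g : E → (J → ℂ)} {U : Set E} (hU : IsOpen U) (hg : DifferentiableOn ℂ g U)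
    {M r : ℝ} (hM : ∀ x ∈ U, ‖g x‖ ≤ M) {x : E} (hx2 : closedBall x (2*r) ⊆ U) (hr : 0 < r) :
    ∀ y ∈ ball x r, ∀ z ∈ ball x r, ‖g y - g z‖ ≤ (M/r) * ‖y - z‖ := by
  intro y hy z hz
  have hball : ball x r ⊆ U := (ball_subset_ball (by linarith)).trans
    (ball_subset_closedBall.trans hx2)
  exact Convex.norm_image_sub_le_of_norm_fderiv_le
    (fun w hw => hg.differentiableAt (hU.mem_nhds (hball hw)))
    (fun w hw => fderiv_bound hU hg hM hx2 hr hw) (convex_ball x r) hz hy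

/-- Montel-type theorem: a uniformly bounded sequence of holomorphic functions on the product
domain has a locally uniformly convergent subsequence. -/
lemma montel (hDo : ∀ i, IsOpen (D i))
    (F : ℕ → E → (J → ℂ)) (hFd : ∀ ν, DifferentiableOn ℂ (F ν) (univ.pi D))
    (M : ℝ) (hM : ∀ ν, ∀ x ∈ univ.pi D, ‖F ν x‖ ≤ M) :
    ∃ φ : ℕ → ℕ, StrictMono φ ∧ ∃ H : E → (J → ℂ),
      TendstoLocallyUniformlyOn (fun ν => F (φ ν)) H atTop (univ.pi D) := by
  have hXo : IsOpen (univ.pi D) := isOpen_set_pi finite_univ (fun i _ => hDo i)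
  rcases (univ.pi D).eq_empty_or_nonempty with hXe | hXne
  · refine ⟨id, strictMono_id, fun _ _ => 0, ?_⟩
    intro u hu x hx
    rw [hXe] at hx
    exact absurd hx (notMem_empty x)
  obtain ⟨a₀, ha₀⟩ := hXne
  have hM0 : 0 ≤ M := le_trans (norm_nonneg _) (hM 0 a₀ ha₀)
  -- countable dense subset of the domain
  haveI : Nonempty ↥(univ.pi D) := ⟨⟨a₀, ha₀⟩⟩
  obtain ⟨s, hsc, hsd⟩ := TopologicalSpace.exists_countable_dense ↥(univ.pi D)
  have hsne : s.Nonempty := hsd.nonempty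
  obtain ⟨τ₀, hτ₀⟩ := Set.Countable.exists_eq_range hsc hsne
  set τ : ℕ → E := fun i => (τ₀ i).val with hτ
  have hτX : ∀ i, τ i ∈ univ.pi D := fun i => (τ₀ i).2
  have hτdense : ∀ y ∈ univ.pi D, ∀ δ : ℝ, 0 < δ → ∃ i, dist y (τ i) < δ := by
    intro y hy δ hδ
    obtain ⟨t, hts, htd⟩ := Metric.dense_iff.mp hsd ⟨y, hy⟩ δ hδ
    rw [hτ₀] at htd
    obtain ⟨i, hi⟩ := htd
    refine ⟨i, ?_⟩
    have : dist (⟨y, hy⟩ : ↥(univ.pi D)) t < δ := mem_ball'.mp hts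
    rw [Subtype.dist_eq] at this
    show dist y ((τ₀ i) : E) < δ
    rw [hi]
    exact this
  -- diagonal subsequence, pointwise convergent on the dense set
  set Φ : ℕ → (ℕ → (J → ℂ)) := fun ν => fun i => F ν (τ i) with hΦ
  have hcomp : IsCompact (univ.pi (fun _ : ℕ => closedBall (0 : J → ℂ) M)) :=
    isCompact_univ_pi (fun _ => isCompact_closedBall _ _)
  have hΦmem : ∀ ν, Φ ν ∈ univ.pi (fun _ : ℕ => closedBall (0 : J → ℂ) M) := by
    intro ν i _
    simpa [hΦ, mem_closedBall, dist_zero_right] using hM ν (τ i) (hτX i)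
  obtain ⟨g, -, φ, hφmono, hφtend⟩ := hcomp.isSeqCompact hΦmem
  have hptCauchy : ∀ i : ℕ, CauchySeq (fun ν => F (φ ν) (τ i)) := by
    intro i
    have := tendsto_pi_nhds.mp hφtend i
    exact this.cauchySeq
  -- local uniform Cauchy estimates
  have key : ∀ x ∈ univ.pi D, ∃ r, 0 < r ∧ ball x r ⊆ univ.pi D ∧
      ∀ ε, 0 < ε → ∃ N, ∀ p ≥ N, ∀ q ≥ N, ∀ y ∈ ball x (r/2),
        dist (F (φ p) y) (F (φ q) y) < ε := by
    intro x hx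
    obtain ⟨r₀, hr₀, hball₀⟩ := Metric.isOpen_iff.mp hXo x hx
    set r := r₀ / 3 with hrdef
    have hrpos : 0 < r := by positivity
    have h2r : closedBall x (2*r) ⊆ univ.pi D := by
      intro u hu
      apply hball₀
      rw [mem_closedBall] at hu
      rw [mem_ball]
      have : 2*r < r₀ := by rw [hrdef]; linarith
      linarith
    have hballX : ball x r ⊆ univ.pi D :=
      (ball_subset_closedBall.trans (closedBall_subset_closedBall (by linarith))).trans h2r
    have hlip : ∀ ν, ∀ y ∈ ball x r, ∀ z ∈ ball x r,
        ‖F ν y - F ν z‖ ≤ (M/r) * ‖y - z‖ := by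
      intro ν
      exact lipschitz_on hXo (hFd ν) (hM ν) h2r hrpos
    refine ⟨r, hrpos, hballX, ?_⟩
    intro ε hε
    set L := M / r with hL
    have hLpos : 0 ≤ L := by positivity
    set δ := min (r/2) (ε / (6 * (L + 1))) with hδdef
    have hδpos : 0 < δ := lt_min (by positivity) (by positivity)
    have hδr : δ ≤ r/2 := min_le_left _ _
    have hδε : L * δ ≤ ε / 6 := by
      have h1 : δ ≤ ε / (6 * (L + 1)) := min_le_right _ _
      calc L * δ ≤ L * (ε / (6 * (L + 1))) := mul_le_mul_of_nonneg_left h1 hLpos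
        _ ≤ (L + 1) * (ε / (6 * (L + 1))) := by
            apply mul_le_mul_of_nonneg_right (by linarith) (by positivity)
        _ = ε / 6 := by field_simp
    -- finite subcover of the compact ball by δ/2-balls
    have hcb : IsCompact (closedBall x (r/2)) := isCompact_closedBall _ _
    obtain ⟨T, hT⟩ := hcb.elim_finite_subcover
      (fun y : ↥(closedBall x (r/2)) => ball y.val (δ/2))
      (fun y => isOpen_ball)
      (fun y hy => mem_iUnion.mpr ⟨⟨y, hy⟩, mem_ball_self (by positivity)⟩)
    -- for each center pick a nearby dense point
    have hpick : ∀ y : ↥(closedBall x (r/2)), ∃ i, dist y.val (τ i) < δ/2 ∧ τ i ∈ ball x r := by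
      intro y
      have hyX : y.val ∈ univ.pi D := hballX (closedBall_subset_ball (by linarith) y.2)
      obtain ⟨i, hi⟩ := hτdense y.val hyX (δ/2) (by positivity)
      refine ⟨i, hi, ?_⟩
      rw [mem_ball]
      calc dist (τ i) x ≤ dist (τ i) y.val + dist y.val x := dist_triangle _ _ _
        _ < δ/2 + r/2 :=
            add_lt_add_of_lt_of_le (by rw [dist_comm]; exact hi) (mem_closedBall.mp y.2)
        _ < r := by linarith
    choose idx hidx1 hidx2 using hpick
    -- Cauchy at the finitely many chosen points
    have hN : ∀ y ∈ T, ∃ N, ∀ p ≥ N, ∀ q ≥ N,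
        dist (F (φ p) (τ (idx y))) (F (φ q) (τ (idx y))) < ε/3 := by
      intro y _
      obtain ⟨N, hN⟩ := Metric.cauchySeq_iff.mp (hptCauchy (idx y)) (ε/3) (by positivity)
      exact ⟨N, fun p hp q hq => hN p hp q hq⟩
    choose Nf hNf using hN
    set N := T.sup (fun y => if h : y ∈ T then Nf y h else 0) with hNdef
    refine ⟨N, ?_⟩
    intro p hp q hq y hy
    have hycb : y ∈ closedBall x (r/2) := ball_subset_closedBall hy
    obtain ⟨yt, hyt, hyty⟩ := mem_iUnion₂.mp (hT hycb)
    have hyball : y ∈ ball x r := ball_subset_ball (by linarith) hy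
    have hτball : τ (idx yt) ∈ ball x r := hidx2 yt
    have hdyτ : dist y (τ (idx yt)) < δ := by
      calc dist y (τ (idx yt)) ≤ dist y yt.val + dist yt.val (τ (idx yt)) := dist_triangle _ _ _
        _ < δ/2 + δ/2 := add_lt_add (mem_ball.mp hyty) (hidx1 yt)
        _ = δ := by ring
    have hNle : Nf yt hyt ≤ N := by
      rw [hNdef]
      have := Finset.le_sup (f := fun y => if h : y ∈ T then Nf y h else 0) hyt
      simpa [hyt] using this
    have hmid := hNf yt hyt p (le_trans hNle hp) q (le_trans hNle hq)
    have h1 : dist (F (φ p) y) (F (φ p) (τ (idx yt))) ≤ L * δ := by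
      rw [dist_eq_norm]
      calc ‖F (φ p) y - F (φ p) (τ (idx yt))‖ ≤ L * ‖y - τ (idx yt)‖ :=
            hlip (φ p) y hyball (τ (idx yt)) hτball
        _ ≤ L * δ := by
            apply mul_le_mul_of_nonneg_left _ hLpos
            rw [← dist_eq_norm]; exact hdyτ.le
    have h2 : dist (F (φ q) (τ (idx yt))) (F (φ q) y) ≤ L * δ := by
      rw [dist_eq_norm]
      calc ‖F (φ q) (τ (idx yt)) - F (φ q) y‖ ≤ L * ‖τ (idx yt) - y‖ :=
            hlip (φ q) (τ (idx yt)) hτball y hyball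
        _ ≤ L * δ := by
            apply mul_le_mul_of_nonneg_left _ hLpos
            rw [← dist_eq_norm, dist_comm]; exact hdyτ.le
    calc dist (F (φ p) y) (F (φ q) y) ≤
        dist (F (φ p) y) (F (φ p) (τ (idx yt))) + dist (F (φ p) (τ (idx yt))) (F (φ q) y) :=
          dist_triangle _ _ _
      _ ≤ dist (F (φ p) y) (F (φ p) (τ (idx yt))) +
          (dist (F (φ p) (τ (idx yt))) (F (φ q) (τ (idx yt))) +
           dist (F (φ q) (τ (idx yt))) (F (φ q) y)) := by
          have := dist_triangle (F (φ p) (τ (idx yt))) (F (φ q) (τ (idx yt))) (F (φ q) y)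
          linarith
      _ ≤ L * δ + (ε/3 + L * δ) := by
          have := hmid.le
          gcongr
      _ ≤ ε/6 + (ε/3 + ε/6) := by gcongr
      _ < ε := by linarith
  -- pointwise convergence everywhere, and the limit function
  have hCauchyAll : ∀ x ∈ univ.pi D, CauchySeq (fun ν => F (φ ν) x) := by
    intro x hx
    obtain ⟨r, hr, hbX, hunif⟩ := key x hx
    rw [Metric.cauchySeq_iff]
    intro ε hε
    obtain ⟨N, hN⟩ := hunif ε hε
    exact ⟨N, fun p hp q hq => hN p hp q hq x (mem_ball_self (by positivity))⟩
  have hHex : ∀ x ∈ univ.pi D, ∃ L, Tendsto (fun ν => F (φ ν) x) atTop (𝓝 L) :=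
    fun x hx => cauchySeq_tendsto_of_complete (hCauchyAll x hx)
  classical
  set H : E → (J → ℂ) := fun x =>
    if hx : ∃ L, Tendsto (fun ν => F (φ ν) x) atTop (𝓝 L) then hx.choose else 0 with hHdef
  have hHtend : ∀ x ∈ univ.pi D, Tendsto (fun ν => F (φ ν) x) atTop (𝓝 (H x)) := by
    intro x hx
    have hex := hHex x hx
    rw [hHdef]
    simp only [dif_pos hex]
    exact hex.choose_spec
  refine ⟨φ, hφmono, H, ?_⟩
  intro u hu x hx
  obtain ⟨r, hr, hbX, hunif⟩ := key x hx
  obtain ⟨ε, hε, hεu⟩ := Metric.mem_uniformity_dist.mp hu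
  obtain ⟨N, hN⟩ := hunif (ε/2) (by positivity)
  refine ⟨ball x (r/2), nhdsWithin_le_nhds (ball_mem_nhds x (by positivity)), ?_⟩
  filter_upwards [eventually_ge_atTop N] with ν hν
  intro y hy
  have hyX : y ∈ univ.pi D := hbX (ball_subset_ball (by linarith) hy)
  have hdist : dist (H y) (F (φ ν) y) ≤ ε/2 := by
    have htend : Tendsto (fun p => dist (F (φ p) y) (F (φ ν) y)) atTop
        (𝓝 (dist (H y) (F (φ ν) y))) :=
      ((hHtend y hyX).dist tendsto_const_nhds)
    apply le_of_tendsto htend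
    filter_upwards [eventually_ge_atTop N] with p hp
    exact (hN p hp ν hν y hy).le
  exact hεu (lt_of_le_of_lt hdist (by linarith))

end Montel

section Collapse

variable {D : Fin n → Set ℂ} {J : Type*} [Fintype J]

/-- packaged hypotheses: a proper holomorphic map from the product domain into a product of
bounded open sets. -/
structure Good (D : Fin n → Set ℂ) (W : J → Set ℂ) (f : E → J → ℂ) : Prop where
  hfd : DifferentiableOn ℂ f (univ.pi D)
  hmaps : MapsTo f (univ.pi D) (univ.pi W)
  hWo : ∀ j, IsOpen (W j)
  hWbd : ∀ j, IsBounded (W j)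
  hproper : ∀ K, K ⊆ univ.pi W → IsCompact K → IsCompact (univ.pi D ∩ f ⁻¹' K)

/-- along a boundary-escaping sequence in the `k`-th variable, after passing to a subsequence,
some component of `f` collapses to a constant outside of its target domain. -/
lemma collapse [Nonempty J]
    (hDo : ∀ i, IsOpen (D i)) (hDc : ∀ i, IsConnected (D i))
    {W : J → Set ℂ} {f : E → J → ℂ} (G : Good D W f)
    (k : Fin n) (ζ : ℕ → ℂ) (hζD : ∀ ν, ζ ν ∈ D k)
    (hesc : ∀ C, IsCompact C → C ⊆ D k → ∀ᶠ ν in atTop, ζ ν ∉ C) :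
    ∃ φ : ℕ → ℕ, StrictMono φ ∧ ∃ j c, c ∉ W j ∧ ∀ x ∈ univ.pi D,
      Tendsto (fun ν => f (Function.update x k (ζ (φ ν))) j) atTop (𝓝 c) := by
  classical
  have hXo : IsOpen (univ.pi D) := isOpen_set_pi finite_univ (fun i _ => hDo i)
  have haX : (univ.pi D).Nonempty :=
    ⟨fun i => ((hDc i).nonempty).choose, fun i _ => ((hDc i).nonempty).choose_spec⟩
  obtain ⟨a, ha⟩ := haX
  -- uniform bound on the target
  have hBex : ∀ j : J, ∃ B : ℝ, 0 ≤ B ∧ ∀ y ∈ W j, ‖y‖ ≤ B := by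
    intro j
    obtain ⟨R, hR⟩ := (G.hWbd j).subset_closedBall 0
    refine ⟨max R 0, le_max_right _ _, fun y hy => ?_⟩
    have := hR hy
    rw [mem_closedBall, dist_zero_right] at this
    exact le_trans this (le_max_left _ _)
  choose Bf hBf0 hBf using hBex
  set B : ℝ := Finset.univ.sup' Finset.univ_nonempty Bf with hBdef
  have hB0 : 0 ≤ B := by
    obtain ⟨j⟩ := (inferInstance : Nonempty J)
    exact le_trans (hBf0 j) (Finset.le_sup' Bf (Finset.mem_univ j))
  have hBj : ∀ j, Bf j ≤ B := fun j => Finset.le_sup' Bf (Finset.mem_univ j)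
  -- the sequence of functions
  set F : ℕ → E → (J → ℂ) := fun ν x => f (Function.update x k (ζ ν)) with hFdef
  have hFd : ∀ ν, DifferentiableOn ℂ (F ν) (univ.pi D) := by
    intro ν
    apply G.hfd.comp (differentiable_update_left k (ζ ν)).differentiableOn
    exact fun x hx => update_mem_pi hx (hζD ν)
  have hFmem : ∀ ν, ∀ x ∈ univ.pi D, F ν x ∈ univ.pi W :=
    fun ν x hx => G.hmaps (update_mem_pi hx (hζD ν))
  have hFbd : ∀ ν, ∀ x ∈ univ.pi D, ‖F ν x‖ ≤ B := by
    intro ν x hx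
    rw [pi_norm_le_iff_of_nonneg hB0]
    intro j
    exact le_trans (hBf j _ (hFmem ν x hx j (mem_univ j))) (hBj j)
  obtain ⟨φ, hφmono, H, hTLU⟩ := montel hDo F hFd B hFbd
  have hpt : ∀ x ∈ univ.pi D, Tendsto (fun ν => F (φ ν) x) atTop (𝓝 (H x)) :=
    fun x hx => hTLU.tendsto_at hx
  have hHc : ContinuousOn H (univ.pi D) :=
    hTLU.continuousOn (Frequently.of_forall fun ν => (hFd (φ ν)).continuousOn)
  have hescφ : ∀ C, IsCompact C → C ⊆ D k → ∀ᶠ ν in atTop, ζ (φ ν) ∉ C :=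
    fun C hC hCD => (hφmono.tendsto_atTop).eventually (hesc C hC hCD)
  -- H takes values in the closure of the target
  have hHcl : ∀ x ∈ univ.pi D, H x ∈ closure (univ.pi W) := by
    intro x hx
    exact mem_closure_of_tendsto (hpt x hx) (Eventually.of_forall fun ν => hFmem (φ ν) x hx)
  have hHclj : ∀ x ∈ univ.pi D, ∀ j, H x j ∈ closure (W j) := by
    intro x hx j
    have := hHcl x hx
    rw [closure_pi_set] at this
    exact this j (mem_univ j)
  -- H never takes values in the open target (properness)
  have hHnot : ∀ x ∈ univ.pi D, H x ∉ univ.pi W := by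
    intro x hx hmem
    have hYo : IsOpen (univ.pi W) := isOpen_set_pi finite_univ (fun j _ => G.hWo j)
    obtain ⟨ρ, hρ, hρball⟩ := Metric.isOpen_iff.mp hYo _ hmem
    have hKY : closedBall (H x) (ρ/2) ⊆ univ.pi W :=
      (closedBall_subset_ball (by linarith)).trans hρball
    have hCc := G.hproper _ hKY (isCompact_closedBall _ _)
    set C : Set ℂ := (fun z : E => z k) '' (univ.pi D ∩ f ⁻¹' closedBall (H x) (ρ/2)) with hCdef
    have hCc' : IsCompact C := hCc.image (continuous_apply k)
    have hCD : C ⊆ D k := by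
      rintro - ⟨z, ⟨hz, -⟩, rfl⟩
      exact hz k (mem_univ k)
    have hev1 : ∀ᶠ ν in atTop, ζ (φ ν) ∉ C := hescφ C hCc' hCD
    have hev2 : ∀ᶠ ν in atTop, f (Function.update x k (ζ (φ ν))) ∈ closedBall (H x) (ρ/2) := by
      have := Metric.tendsto_nhds.mp (hpt x hx) (ρ/2) (by positivity)
      filter_upwards [this] with ν hν
      rw [mem_closedBall]
      exact hν.le
    obtain ⟨ν, h1, h2⟩ := (hev1.and hev2).exists
    exact h1 ⟨Function.update x k (ζ (φ ν)), ⟨update_mem_pi hx (hζD (φ ν)), h2⟩,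
      Function.update_self _ _ _⟩
  -- slice holomorphy of H
  have hHslice : ∀ x ∈ univ.pi D, ∀ i,
      DifferentiableOn ℂ (fun w => H (Function.update x i w)) (D i) := by
    intro x hx i
    have hcomp := hTLU.comp (fun w : ℂ => Function.update x i w)
      (fun w hw => update_mem_pi hx hw) (differentiable_update i x).continuous.continuousOn
    exact hcomp.differentiableOn
      (Eventually.of_forall fun ν => slice_diffOn (hFd (φ ν)) hx i) (hDo i)
  have hHslicej : ∀ x ∈ univ.pi D, ∀ i (j : J),
      DifferentiableOn ℂ (fun w => H (Function.update x i w) j) (D i) := by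
    intro x hx i j
    exact differentiableOn_pi.mp (hHslice x hx i) j
  -- Baire: some component stays outside its target on a small ball
  obtain ⟨ε₀, hε₀, hball₀⟩ := Metric.isOpen_iff.mp hXo a ha
  have hcb : closedBall a (ε₀/2) ⊆ univ.pi D :=
    (closedBall_subset_ball (by linarith)).trans hball₀
  obtain ⟨j₀, y₁, δ, hδ, hbsub, hP⟩ := exists_ball_P (P := fun j x => H x j ∉ W j) a (ε₀/2)
    (by positivity)
    (fun j => by
      have hc : ContinuousOn (fun x => H x j) (closedBall a (ε₀/2)) :=
        ((continuous_apply j).comp_continuousOn hHc).mono hcb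
      have := hc.preimage_isClosed_of_isClosed Metric.isClosed_closedBall (G.hWo j).isClosed_compl
      exact this)
    (fun x hx => by
      have hxX : x ∈ univ.pi D := hcb hx
      have h1 := hHnot x hxX
      rw [mem_univ_pi] at h1
      push_neg at h1
      exact h1)
  have hball_sub_X : ball y₁ δ ⊆ univ.pi D := hbsub.trans hcb
  have hy₁X : y₁ ∈ univ.pi D := hball_sub_X (mem_ball_self hδ)
  set c : ℂ := H y₁ j₀ with hcdef
  -- staircase: H · j₀ is constant on the ball
  have hstep : ∀ x ∈ ball y₁ δ, H x j₀ = c := by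
    suffices Hs : ∀ S : Finset (Fin n), ∀ x ∈ ball y₁ δ,
        (∀ i, i ∉ S → x i = y₁ i) → H x j₀ = c by
      intro x hx
      exact Hs Finset.univ x hx (fun i hi => absurd (Finset.mem_univ i) hi)
    intro S
    induction S using Finset.induction_on with
    | empty =>
      intro x hx hcoord
      have : x = y₁ := funext fun i => hcoord i (by simp)
      rw [this]
    | @insert i S hiS IH =>
      intro x hx hcoord
      have hxX : x ∈ univ.pi D := hball_sub_X hx
      have hxcoord : ∀ l, dist (x l) (y₁ l) < δ := (dist_pi_lt_iff hδ).mp (mem_ball.mp hx)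
      have hupdate_mem : ∀ ζ' ∈ ball (y₁ i) δ, Function.update x i ζ' ∈ ball y₁ δ := by
        intro ζ' hζ'
        rw [mem_ball, dist_pi_lt_iff hδ]
        intro l
        rcases eq_or_ne l i with rfl | hl
        · simpa using hζ'
        · rw [Function.update_apply, if_neg hl]
          exact hxcoord l
      have hball_i : ball (y₁ i) δ ⊆ D i := by
        intro ζ' hζ'
        have := hball_sub_X (hupdate_mem ζ' hζ')
        simpa using this i (mem_univ i)
      set u : ℂ → ℂ := fun ζ' => H (Function.update x i ζ') j₀ with hudef
      have hud : DifferentiableOn ℂ u (ball (y₁ i) δ) :=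
        (hHslicej x hxX i j₀).mono hball_i
      have hanal : AnalyticOnNhd ℂ u (ball (y₁ i) δ) := hud.analyticOnNhd isOpen_ball
      have hxiball : x i ∈ ball (y₁ i) δ := by
        rw [mem_ball]; exact hxcoord i
      have hx' : Function.update x i (y₁ i) ∈ ball y₁ δ := hupdate_mem _ (mem_ball_self hδ)
      have hIH : H (Function.update x i (y₁ i)) j₀ = c := by
        apply IH _ hx'
        intro l hl
        rcases eq_or_ne l i with rfl | hne
        · simp
        · rw [Function.update_apply, if_neg hne]
          exact hcoord l (by simp [hl, hne])
      rcases hanal.is_constant_or_isOpen (convex_ball _ _).isPreconnected with ⟨w, hw⟩ | hopen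
      · have h1 : u (x i) = w := hw _ hxiball
        have h2 : u (y₁ i) = w := hw _ (mem_ball_self hδ)
        have h3 : H x j₀ = u (x i) := by rw [hudef]; simp [Function.update_eq_self]
        rw [h3, h1, ← h2]
        show H (Function.update x i (y₁ i)) j₀ = c
        exact hIH
      · exfalso
        have himg : u '' (ball (y₁ i) δ) ⊆ closure (W j₀) \ W j₀ := by
          rintro - ⟨ζ', hζ', rfl⟩
          have hxζ : Function.update x i ζ' ∈ ball y₁ δ := hupdate_mem _ hζ'
          exact ⟨hHclj _ (hball_sub_X hxζ) j₀, hP _ hxζ⟩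
        have hio : IsOpen (u '' ball (y₁ i) δ) := hopen _ (subset_refl _) isOpen_ball
        have hne : (u '' ball (y₁ i) δ).Nonempty :=
          ⟨u (y₁ i), mem_image_of_mem _ (mem_ball_self hδ)⟩
        obtain ⟨w₀, hw₀⟩ := hne
        have hw₀cl : w₀ ∈ closure (W j₀) := (himg hw₀).1
        rw [_root_.mem_closure_iff] at hw₀cl
        obtain ⟨y, hy1, hy2⟩ := hw₀cl _ hio hw₀
        exact (himg hy1).2 hy2
  -- globalize via the identity lemma
  have hglob : ∀ z ∈ univ.pi D, H z j₀ - c = 0 := by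
    apply eq_zero_of_zero_on_ball hDo hDc (fun z => H z j₀ - c)
      (fun x hx i => ((hHslicej x hx i j₀).sub_const c)) y₁ hy₁X δ hδ hball_sub_X
    intro z hz
    rw [hstep z hz, sub_self]
  refine ⟨φ, hφmono, j₀, c, hP y₁ (mem_ball_self hδ), ?_⟩
  intro x hx
  have := tendsto_pi_nhds.mp (hpt x hx) j₀
  have hHx : H x j₀ = c := by
    have := hglob x hx
    linear_combination this
  rw [← hHx]
  exact this

end Collapse

section Product

variable {D : Fin n → Set ℂ} {J : Type*} [Fintype J]

lemma product_vanishes [Nonempty J]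
    (hDo : ∀ i, IsOpen (D i)) (hDc : ∀ i, IsConnected (D i))
    {W : J → Set ℂ} {f : E → J → ℂ} (G : Good D W f)
    (k : Fin n) (ℓ : J → Fin n) (hℓ : ∀ j, ℓ j ≠ k)
    (w1 w2 : J → ℂ) (hw1 : ∀ j, w1 j ∈ D (ℓ j)) (hw2 : ∀ j, w2 j ∈ D (ℓ j)) :
    ∀ z ∈ univ.pi D, (∏ j, (f (Function.update z (ℓ j) (w1 j)) j
      - f (Function.update z (ℓ j) (w2 j)) j)) = 0 := by
  classical
  intro z hz
  -- bound for the components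
  have hBex : ∀ j : J, ∃ B : ℝ, 0 ≤ B ∧ ∀ y ∈ W j, ‖y‖ ≤ B := by
    intro j
    obtain ⟨R, hR⟩ := (G.hWbd j).subset_closedBall 0
    refine ⟨max R 0, le_max_right _ _, fun y hy => ?_⟩
    have := hR hy
    rw [mem_closedBall, dist_zero_right] at this
    exact le_trans this (le_max_left _ _)
  choose Bf hBf0 hBf using hBex
  have hfb : ∀ x ∈ univ.pi D, ∀ j : J, ‖f x j‖ ≤ Bf j := by
    intro x hx j
    exact hBf j _ (G.hmaps hx j (mem_univ j))
  -- the one-variable function in the k-th coordinate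
  set u : ℂ → ℂ := fun ζ' => ∏ j, (f (Function.update (Function.update z k ζ') (ℓ j) (w1 j)) j
      - f (Function.update (Function.update z k ζ') (ℓ j) (w2 j)) j) with hudef
  have hcomm' : ∀ (ζ' : ℂ) (j : J) (w : ℂ),
      Function.update (Function.update z k ζ') (ℓ j) w
        = Function.update (Function.update z (ℓ j) w) k ζ' := by
    intro ζ' j w
    exact Function.update_comm (Ne.symm (hℓ j)) ζ' w z
  have hfacd : ∀ (j : J) (w : ℂ), w ∈ D (ℓ j) →
      DifferentiableOn ℂ (fun ζ' => f (Function.update (Function.update z k ζ') (ℓ j) w) j)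
        (D k) := by
    intro j w hw
    have hbase : Function.update z (ℓ j) w ∈ univ.pi D := update_mem_pi hz hw
    have := differentiableOn_pi.mp (slice_diffOn G.hfd hbase k) j
    apply this.congr
    intro ζ' _
    rw [hcomm' ζ' j w]
  have hud : DifferentiableOn ℂ u (D k) := by
    apply DifferentiableOn.fun_finset_prod
    intro j _
    exact (hfacd j (w1 j) (hw1 j)).sub (hfacd j (w2 j) (hw2 j))
  -- u is small outside compact subsets of D k
  have hsmall : ∀ ε : ℝ, 0 < ε → ∃ Q, IsCompact Q ∧ Q ⊆ D k ∧ ∀ ζ' ∈ D k \ Q, ‖u ζ'‖ ≤ ε := by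
    by_contra hcon
    push_neg at hcon
    obtain ⟨ε₀, hε₀, hbad⟩ := hcon
    obtain ⟨Q, hQ, hQmono, hQcov⟩ := exists_exhaustion (D k) (hDo k)
    have hpick : ∀ i : ℕ, ∃ ζ', ζ' ∈ D k \ Q i ∧ ε₀ < ‖u ζ'‖ := by
      intro i
      obtain ⟨ζ', hζ'1, hζ'2⟩ := hbad (Q i) (hQ i).1 (hQ i).2
      exact ⟨ζ', hζ'1, hζ'2⟩
    choose ζs hζs1 hζs2 using hpick
    have hζsD : ∀ i, ζs i ∈ D k := fun i => (hζs1 i).1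
    have hescs : ∀ C, IsCompact C → C ⊆ D k → ∀ᶠ ν in atTop, ζs ν ∉ C := by
      intro C hC hCD
      obtain ⟨i₀, hi₀⟩ := hQcov C hC hCD
      filter_upwards [eventually_ge_atTop i₀] with ν hν hmem
      exact (hζs1 ν).2 (hQmono i₀ ν hν (hi₀ hmem))
    obtain ⟨φ, hφ, j₀, c, hcW, hconv⟩ := collapse hDo hDc G k ζs hζsD hescs
    -- the j₀-factor tends to zero along the subsequence
    set x1 := Function.update z (ℓ j₀) (w1 j₀) with hx1def
    set x2 := Function.update z (ℓ j₀) (w2 j₀) with hx2def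
    have hx1 : x1 ∈ univ.pi D := update_mem_pi hz (hw1 j₀)
    have hx2 : x2 ∈ univ.pi D := update_mem_pi hz (hw2 j₀)
    have hfac : Tendsto (fun ν => f (Function.update x1 k (ζs (φ ν))) j₀
        - f (Function.update x2 k (ζs (φ ν))) j₀) atTop (𝓝 0) := by
      have := (hconv x1 hx1).sub (hconv x2 hx2)
      simpa using this
    -- remaining factors are bounded
    set R : ℝ := ∏ j ∈ Finset.univ.erase j₀, (2 * Bf j) with hRdef
    have hbound : ∀ ν, ‖u (ζs (φ ν))‖ ≤
        ‖f (Function.update x1 k (ζs (φ ν))) j₀ - f (Function.update x2 k (ζs (φ ν))) j₀‖ * R := by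
      intro ν
      have hexp : u (ζs (φ ν)) = (f (Function.update x1 k (ζs (φ ν))) j₀
          - f (Function.update x2 k (ζs (φ ν))) j₀)
          * ∏ j ∈ Finset.univ.erase j₀,
            (f (Function.update (Function.update z k (ζs (φ ν))) (ℓ j) (w1 j)) j
              - f (Function.update (Function.update z k (ζs (φ ν))) (ℓ j) (w2 j)) j) := by
        simp only [hudef]
        rw [← Finset.mul_prod_erase Finset.univ _ (Finset.mem_univ j₀)]
        congr 1
        rw [hx1def, hx2def, hcomm' _ j₀ (w1 j₀), hcomm' _ j₀ (w2 j₀)]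
      rw [hexp, norm_mul]
      apply mul_le_mul_of_nonneg_left _ (norm_nonneg _)
      calc ‖∏ j ∈ Finset.univ.erase j₀, _‖
          = ∏ j ∈ Finset.univ.erase j₀, ‖(f (Function.update (Function.update z k (ζs (φ ν))) (ℓ j) (w1 j)) j
              - f (Function.update (Function.update z k (ζs (φ ν))) (ℓ j) (w2 j)) j)‖ := norm_prod _ _
        _ ≤ R := by
            rw [hRdef]
            apply Finset.prod_le_prod (fun j _ => norm_nonneg _)
            intro j _
            have hm1 : Function.update (Function.update z k (ζs (φ ν))) (ℓ j) (w1 j) ∈ univ.pi D :=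
              update_mem_pi (update_mem_pi hz (hζsD (φ ν))) (hw1 j)
            have hm2 : Function.update (Function.update z k (ζs (φ ν))) (ℓ j) (w2 j) ∈ univ.pi D :=
              update_mem_pi (update_mem_pi hz (hζsD (φ ν))) (hw2 j)
            calc ‖_ - _‖ ≤ ‖_‖ + ‖_‖ := norm_sub_le _ _
              _ ≤ Bf j + Bf j := add_le_add (hfb _ hm1 j) (hfb _ hm2 j)
              _ = 2 * Bf j := by ring
    have hR0 : 0 ≤ R := Finset.prod_nonneg (fun j _ => by linarith [hBf0 j])
    have hu0 : Tendsto (fun ν => ‖u (ζs (φ ν))‖) atTop (𝓝 0) := by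
      apply squeeze_zero (fun ν => norm_nonneg _) hbound
      have := (hfac.norm).mul_const R
      simpa using this
    have hev := (Metric.tendsto_nhds.mp hu0 ε₀ hε₀)
    obtain ⟨ν, hν⟩ := hev.exists
    rw [Real.dist_eq, sub_zero, abs_of_nonneg (norm_nonneg _)] at hν
    exact absurd (hζs2 (φ ν)) (not_lt.mpr hν.le)
  -- maximum principle: u vanishes identically
  have huzero := eq_zero_of_small_outside (D k) (hDo k) (hDc k).isPreconnected u hud hsmall
  have := huzero (z k) (hz k (mem_univ k))
  simp only [hudef] at this
  simpa [Function.update_eq_self] using this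

end Product

section Key

variable {D : Fin n → Set ℂ} {J : Type*} [Fintype J]

lemma differentiable_update2 (i l : Fin n) (x : E) (c : ℂ) :
    Differentiable ℂ (fun w : ℂ => Function.update (Function.update x i w) l c) :=
  (differentiable_update_left l c).comp (differentiable_update i x)

/-- every variable has a component of `f` not depending on any of the other variables -/
lemma key [Nonempty J]
    (hDo : ∀ i, IsOpen (D i)) (hDc : ∀ i, IsConnected (D i))
    {W : J → Set ℂ} {f : E → J → ℂ} (G : Good D W f) (k : Fin n) :
    ∃ j : J, ∀ l, l ≠ k → ∀ z ∈ univ.pi D, ∀ w ∈ D l,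
      f (Function.update z l w) j = f z j := by
  classical
  by_contra hcon
  push_neg at hcon
  choose ℓ hℓk zz hzz ww hww hne using hcon
  set w1 : J → ℂ := ww with hw1def
  set w2 : J → ℂ := fun j => (zz j) (ℓ j) with hw2def
  have hw1D : ∀ j, w1 j ∈ D (ℓ j) := hww
  have hw2D : ∀ j, w2 j ∈ D (ℓ j) := fun j => (hzz j) (ℓ j) (mem_univ _)
  set Gf : J → E → ℂ := fun j x => f (Function.update x (ℓ j) (w1 j)) j
      - f (Function.update x (ℓ j) (w2 j)) j with hGfdef
  have hslice : ∀ (j : J) (c : ℂ), c ∈ D (ℓ j) → ∀ x ∈ univ.pi D, ∀ i,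
      DifferentiableOn ℂ (fun w => f (Function.update (Function.update x i w) (ℓ j) c) j)
        (D i) := by
    intro j c hc x hx i
    have hmaps : ∀ w ∈ D i, Function.update (Function.update x i w) (ℓ j) c ∈ univ.pi D :=
      fun w hw => update_mem_pi (update_mem_pi hx hw) hc
    have := G.hfd.comp (differentiable_update2 i (ℓ j) x c).differentiableOn hmaps
    exact differentiableOn_pi.mp this j
  have hcont : ∀ (j : J) (c : ℂ), c ∈ D (ℓ j) →
      ContinuousOn (fun x => f (Function.update x (ℓ j) c) j) (univ.pi D) := by
    intro j c hc
    have h1 : ContinuousOn (fun x : E => f (Function.update x (ℓ j) c)) (univ.pi D) :=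
      G.hfd.continuousOn.comp (differentiable_update_left (ℓ j) c).continuous.continuousOn
        (fun x hx => update_mem_pi hx hc)
    exact (continuous_apply j).comp_continuousOn h1
  have hprod := product_vanishes hDo hDc G k ℓ hℓk w1 w2 hw1D hw2D
  obtain ⟨j, hj⟩ := factor_vanishes hDo hDc
    (fun i => ((hDc i).nonempty).choose) (fun i _ => ((hDc i).nonempty).choose_spec)
    Gf
    (fun j => ((hcont j (w1 j) (hw1D j)).sub (hcont j (w2 j) (hw2D j))))
    (fun j x hx i => ((hslice j (w1 j) (hw1D j) x hx i).sub (hslice j (w2 j) (hw2D j) x hx i)))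
    hprod
  have := hj (zz j) (hzz j)
  rw [hGfdef] at this
  simp only [hw2def, Function.update_eq_self] at this
  exact hne j (by linear_combination this)

/-- moving coordinates one at a time -/
lemma chain {f : E → J → ℂ} (j : J) :
    ∀ S : Finset (Fin n),
      (∀ l ∈ S, ∀ z ∈ univ.pi D, ∀ w ∈ D l, f (Function.update z l w) j = f z j) →
      ∀ z ∈ univ.pi D, ∀ z' ∈ univ.pi D, (∀ i, i ∉ S → z i = z' i) → f z j = f z' j := by
  classical
  intro S
  induction S using Finset.induction_on with
  | empty =>
    intro _ z hz z' hz' hcoord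
    have : z = z' := funext fun i => hcoord i (by simp)
    rw [this]
  | @insert i S hiS IH =>
    intro hind z hz z' hz' hcoord
    have hz'iD : z' i ∈ D i := hz' i (mem_univ i)
    have hupd : Function.update z i (z' i) ∈ univ.pi D := update_mem_pi hz hz'iD
    have h1 : f (Function.update z i (z' i)) j = f z j :=
      hind i (Finset.mem_insert_self i S) z hz (z' i) hz'iD
    rw [← h1]
    apply IH (fun l hl => hind l (Finset.mem_insert_of_mem hl)) _ hupd z' hz'
    intro l hl
    rcases eq_or_ne l i with rfl | hne
    · simp
    · rw [Function.update_apply, if_neg hne]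
      exact hcoord l (by simp [hl, hne])

/-- dropping a constant component of a proper map -/
lemma restrict [DecidableEq J] {W : J → Set ℂ} {f : E → J → ℂ} (G : Good D W f)
    (a : E) (ha : a ∈ univ.pi D) (j₀ : J)
    (hconst : ∀ z ∈ univ.pi D, f z j₀ = f a j₀) :
    Good D (fun j' : {j : J // j ≠ j₀} => W j'.val) (fun z j' => f z j'.val) := by
  classical
  set c : ℂ := f a j₀ with hcdef
  set ι : ({j : J // j ≠ j₀} → ℂ) → (J → ℂ) :=
    fun y' j => if h : j = j₀ then c else y' ⟨j, h⟩ with hιdef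
  have hιc : Continuous ι := by
    apply continuous_pi
    intro j
    by_cases h : j = j₀
    · simp only [hιdef, dif_pos h]
      exact continuous_const
    · simp only [hιdef, dif_neg h]
      exact continuous_apply _
  constructor
  · rw [differentiableOn_pi]
    intro j'
    exact differentiableOn_pi.mp G.hfd j'.val
  · intro z hz j' _
    exact G.hmaps hz j'.val (mem_univ _)
  · exact fun j' => G.hWo j'.val
  · exact fun j' => G.hWbd j'.val
  · intro K' hK' hK'c
    have hKW : ι '' K' ⊆ univ.pi W := by
      rintro - ⟨y', hy', rfl⟩ j -
      by_cases h : j = j₀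
      · simp only [hιdef, dif_pos h]
        rw [h]
        exact G.hmaps ha j₀ (mem_univ _)
      · simp only [hιdef, dif_neg h]
        exact hK' hy' ⟨j, h⟩ (mem_univ _)
    have heq : univ.pi D ∩ f ⁻¹' (ι '' K')
        = univ.pi D ∩ (fun z (j' : {j : J // j ≠ j₀}) => f z j'.val) ⁻¹' K' := by
      ext z
      simp only [mem_inter_iff, mem_preimage, and_congr_right_iff]
      intro hz
      constructor
      · rintro ⟨y', hy', hfy⟩
        have hy : (fun j' : {j : J // j ≠ j₀} => f z j'.val) = y' := by
          funext j'
          have := congrFun hfy j'.val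
          rw [← this]
          simp only [hιdef, dif_neg j'.2]
        rw [hy]
        exact hy'
      · intro hmem
        refine ⟨fun j' => f z j'.val, hmem, ?_⟩
        funext j
        by_cases h : j = j₀
        · simp only [hιdef, dif_pos h]
          rw [h]
          exact (hconst z hz).symm
        · simp only [hιdef, dif_neg h]
    have := G.hproper _ hKW (hK'c.image hιc)
    rwa [heq] at this

/-- there is no proper holomorphic map into a product with fewer factors. -/
lemma no_small (hDo : ∀ i, IsOpen (D i)) (hDc : ∀ i, IsConnected (D i)) (hn : 0 < n) :
    ∀ m : ℕ, m < n → ∀ (J' : Type) [Fintype J'], ∀ (W : J' → Set ℂ) (f : E → J' → ℂ),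
      Fintype.card J' = m → Good D W f → False := by
  have hXo : IsOpen (univ.pi D) := isOpen_set_pi finite_univ (fun i _ => hDo i)
  have haX : (univ.pi D).Nonempty :=
    ⟨fun i => ((hDc i).nonempty).choose, fun i _ => ((hDc i).nonempty).choose_spec⟩
  obtain ⟨a, ha⟩ := haX
  intro m
  induction m with
  | zero =>
    intro _ J' instJ' W f hcard G
    haveI : IsEmpty J' := Fintype.card_eq_zero_iff.mp hcard
    haveI : Subsingleton (J' → ℂ) := ⟨fun x y => funext fun j => isEmptyElim j⟩
    haveI : Finite (J' → ℂ) := Finite.of_subsingleton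
    have huniv : (univ : Set (J' → ℂ)) ⊆ univ.pi W := fun y _ j => isEmptyElim j
    have hXcomp := G.hproper univ huniv Set.finite_univ.isCompact
    rw [preimage_univ, inter_univ] at hXcomp
    have hclopen : IsClopen (univ.pi D) := ⟨hXcomp.isClosed, hXo⟩
    have hXuniv : univ.pi D = univ := hclopen.eq_univ ⟨a, ha⟩
    rw [hXuniv] at hXcomp
    obtain ⟨R, hR⟩ := hXcomp.isBounded.subset_closedBall 0
    haveI : Nonempty (Fin n) := Fin.pos_iff_nonempty.mp hn
    have hy := hR (mem_univ (fun _ : Fin n => ((|R| + 1 : ℝ) : ℂ)))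
    rw [mem_closedBall, dist_zero_right, pi_norm_const] at hy
    have : ‖((|R| + 1 : ℝ) : ℂ)‖ = |R| + 1 := by
      rw [Complex.norm_real]
      exact abs_of_nonneg (by positivity)
    rw [this] at hy
    have := le_abs_self R
    linarith
  | succ m IH =>
    intro hm J' instJ' W f hcard G
    haveI : Nonempty J' := Fintype.card_pos_iff.mp (by rw [hcard]; omega)
    classical
    choose χ hχ using fun k => key hDo hDc G k
    have hcardlt : Fintype.card J' < Fintype.card (Fin n) := by
      rw [hcard, Fintype.card_fin]
      omega
    obtain ⟨k₁, k₂, hkne, hkeq⟩ := Fintype.exists_ne_map_eq_of_card_lt χ hcardlt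
    set j₀ := χ k₁ with hj₀def
    have hind : ∀ l, ∀ z ∈ univ.pi D, ∀ w ∈ D l, f (Function.update z l w) j₀ = f z j₀ := by
      intro l
      rcases eq_or_ne l k₁ with rfl | h1
      · have h2 := hχ k₂ l hkne
        rw [hkeq]
        exact h2
      · exact hχ k₁ l h1
    have hconst : ∀ z ∈ univ.pi D, f z j₀ = f a j₀ := by
      intro z hz
      exact chain j₀ Finset.univ (fun l _ => hind l) z hz a ha
        (fun i hi => absurd (Finset.mem_univ i) hi)
    have G' := restrict G a ha j₀ hconst
    have hcard' : Fintype.card {j : J' // j ≠ j₀} = m := by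
      have h1 : Fintype.card {j : J' // j ≠ j₀} = Fintype.card J' - 1 := by
        have := Fintype.card_subtype_compl (fun j : J' => j = j₀)
        rw [Fintype.card_subtype_eq] at this
        exact this
      rw [h1, hcard]
      omega
    exact IH (by omega) {j : J' // j ≠ j₀} _ _ hcard' G'

end Key

section Final

variable {D : Fin n → Set ℂ}

lemma main_split (hn : 1 ≤ n)
    (hDo : ∀ i, IsOpen (D i)) (hDc : ∀ i, IsConnected (D i))
    {W : Fin n → Set ℂ} {f : E → Fin n → ℂ} (G : Good D W f) :
    ∃ (p : Equiv.Perm (Fin n)) (g : Fin n → ℂ → ℂ),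
      (∀ j, DifferentiableOn ℂ (g j) (D (p j))) ∧
      (∀ j, MapsTo (g j) (D (p j)) (W j)) ∧
      (∀ z ∈ univ.pi D, ∀ j, f z j = g j (z (p j))) := by
  classical
  haveI : Nonempty (Fin n) := Fin.pos_iff_nonempty.mp hn
  have haX : (univ.pi D).Nonempty :=
    ⟨fun i => ((hDc i).nonempty).choose, fun i _ => ((hDc i).nonempty).choose_spec⟩
  obtain ⟨a, ha⟩ := haX
  choose χ hχ using fun k => key hDo hDc G k
  have hinj : Function.Injective χ := by
    intro k₁ k₂ hkeq
    by_contra hkne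
    set j₀ := χ k₁ with hj₀def
    have hind : ∀ l, ∀ z ∈ univ.pi D, ∀ w ∈ D l,
        f (Function.update z l w) j₀ = f z j₀ := by
      intro l
      rcases eq_or_ne l k₁ with rfl | h1
      · have h2 := hχ k₂ l hkne
        rw [hkeq]
        exact h2
      · exact hχ k₁ l h1
    have hconst : ∀ z ∈ univ.pi D, f z j₀ = f a j₀ :=
      fun z hz => chain j₀ Finset.univ (fun l _ => hind l) z hz a ha
        (fun i hi => absurd (Finset.mem_univ i) hi)
    have G' := restrict G a ha j₀ hconst
    have hcard' : Fintype.card {j : Fin n // j ≠ j₀} = n - 1 := by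
      have h1 := Fintype.card_subtype_compl (fun j : Fin n => j = j₀)
      rw [Fintype.card_subtype_eq] at h1
      rw [h1, Fintype.card_fin]
    exact no_small hDo hDc (by omega) (n-1) (by omega) _ _ _ hcard' G'
  have hbij : Function.Bijective χ := (Finite.injective_iff_bijective).mp hinj
  set P := Equiv.ofBijective χ hbij with hPdef
  refine ⟨P.symm, fun j w => f (Function.update a (P.symm j) w) j, ?_, ?_, ?_⟩
  · intro j
    exact differentiableOn_pi.mp (slice_diffOn G.hfd ha (P.symm j)) j
  · intro j w hw
    exact G.hmaps (update_mem_pi ha hw) j (mem_univ j)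
  · intro z hz j
    set k := P.symm j with hkdef
    have hχk : χ k = j := by
      have : P k = j := by
        rw [hkdef]
        exact P.apply_symm_apply j
      simpa [hPdef, Equiv.ofBijective_apply] using this
    have hindk : ∀ l ∈ Finset.univ.erase k, ∀ z ∈ univ.pi D, ∀ w ∈ D l,
        f (Function.update z l w) j = f z j := by
      intro l hl
      rw [← hχk]
      exact hχ k l (Finset.ne_of_mem_erase hl)
    have hz' : Function.update a k (z k) ∈ univ.pi D := update_mem_pi ha (hz k (mem_univ k))
    have hch := chain j (Finset.univ.erase k) hindk z hz _ hz' ?_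
    · exact hch
    · intro i hi
      have hik : i = k := by
        by_contra hne
        exact hi (Finset.mem_erase.mpr ⟨hne, Finset.mem_univ i⟩)
      rw [hik, Function.update_self]

end Final

end RS

open RS in
/-- **Remmert–Stein theorem.** Let `D = D₁ × ⋯ × Dₙ` with each `Dⱼ ⊆ ℂ` a nonempty open
connected set whose complement has nonempty interior, and `W = W₁ × ⋯ × Wₙ` with each
`Wⱼ ⊆ ℂ` a bounded nonempty open connected set. Every proper holomorphic map `f : D → W`
splits: each component `fⱼ` depends only on the variable `z_{p j}` for some permutation `p`. -/
theorem remmert_stein (n : ℕ) (hn : 1 ≤ n) (D W : Fin n → Set ℂ)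
    (hDo : ∀ j, IsOpen (D j)) (hDc : ∀ j, IsConnected (D j))
    (hDint : ∀ j, (interior (D j)ᶜ).Nonempty)
    (hWo : ∀ j, IsOpen (W j)) (hWc : ∀ j, IsConnected (W j))
    (hWbd : ∀ j, Bornology.IsBounded (W j))
    (f : (Fin n → ℂ) → (Fin n → ℂ))
    (hf : DifferentiableOn ℂ f (univ.pi D))
    (hmaps : MapsTo f (univ.pi D) (univ.pi W))
    (hproper : ∀ K, K ⊆ univ.pi W → IsCompact K → IsCompact (univ.pi D ∩ f ⁻¹' K)) :
    ∃ (p : Equiv.Perm (Fin n)) (g : Fin n → ℂ → ℂ),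
      (∀ j, DifferentiableOn ℂ (g j) (D (p j))) ∧
      (∀ j, MapsTo (g j) (D (p j)) (W j)) ∧
      (∀ z ∈ univ.pi D, ∀ j, f z j = g j (z (p j))) := by
  have G : Good D W f := ⟨hf, hmaps, hWo, hWbd, hproper⟩
  exact main_split hn hDo hDc G
end

section
/- Let 𝔻 ⊆ ℂ be the open unit disc and let F : 𝔻 × ℂ → 𝔻 × ℂ be a biholomorphism (a bijective holomorphic map whose inverse is holomorphic). Then there exist a biholomorphism ψ : 𝔻 → 𝔻 and holomorphic functions A, B : 𝔻 → ℂ with A(z) ≠ 0 for all z ∈ 𝔻, such that F(z₁, z₂) = (ψ(z₁), A(z₁)·z₂ + B(z₁)) for all (z₁, z₂) ∈ 𝔻 × ℂ. -/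
open Set Bornology Polynomial Filter Topology


lemma growth_poly : ∀ (n : ℕ) (f : ℂ → ℂ), Differentiable ℂ f →
    ∀ C R : ℝ, (∀ z : ℂ, R ≤ ‖z‖ → ‖f z‖ ≤ C * ‖z‖ ^ n) →
    ∃ p : Polynomial ℂ, ∀ z, f z = p.eval z := by
  intro n
  induction n with
  | zero =>
    intro f hf C R hbd
    have hb : IsBounded (Set.range f) := by
      have h1 : IsBounded (f '' Metric.closedBall 0 |R|) :=
        ((isCompact_closedBall (0:ℂ) |R|).image hf.continuous).isBounded
      have h2 : IsBounded (Metric.closedBall (0:ℂ) |C|) := Metric.isBounded_closedBall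
      refine (h1.union h2).subset ?_
      rintro - ⟨z, rfl⟩
      rcases le_total ‖z‖ |R| with h | h
      · exact Or.inl ⟨z, by simpa using h, rfl⟩
      · refine Or.inr ?_
        have := hbd z ((le_abs_self R).trans h)
        simp only [pow_zero, mul_one] at this
        simpa [Metric.mem_closedBall, Complex.dist_eq] using this.trans (le_abs_self C)
    obtain ⟨c, hc⟩ := hf.exists_const_forall_eq_of_bounded hb
    exact ⟨Polynomial.C c, fun z => by simp [hc z]⟩
  | succ n ih =>
    intro f hf C R hbd
    set g := dslope f 0 with hgdef
    have hg : Differentiable ℂ g := by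
      rw [← differentiableOn_univ] at hf ⊢
      exact (Complex.differentiableOn_dslope Filter.univ_mem).mpr hf
    have hgb : ∀ z : ℂ, max R 1 ≤ ‖z‖ → ‖g z‖ ≤ (|C| + ‖f 0‖) * ‖z‖ ^ n := by
      intro z hz
      have hz1 : (1:ℝ) ≤ ‖z‖ := le_trans (le_max_right _ _) hz
      have hz0 : z ≠ 0 := by
        intro h; rw [h] at hz1; simp at hz1; linarith
      have hgz : g z = z⁻¹ * (f z - f 0) := by
        rw [hgdef, dslope_of_ne f hz0, slope_def_field]
        field_simp
        simp
      have hfz : ‖f z‖ ≤ C * ‖z‖ ^ (n + 1) := hbd z (le_trans (le_max_left _ _) hz)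
      have hCp : C * ‖z‖ ^ (n+1) ≤ |C| * ‖z‖ ^ (n+1) := by
        have : (0:ℝ) ≤ ‖z‖ ^ (n+1) := by positivity
        nlinarith [le_abs_self C]
      have hzpos : (0:ℝ) < ‖z‖ := by linarith
      have hpow : (1:ℝ) ≤ ‖z‖ ^ n := one_le_pow₀ hz1
      calc ‖g z‖ = ‖z‖⁻¹ * ‖f z - f 0‖ := by rw [hgz, norm_mul, norm_inv]
        _ ≤ ‖z‖⁻¹ * (|C| * ‖z‖ ^ (n+1) + ‖f 0‖) := by
            refine mul_le_mul_of_nonneg_left ?_ (by positivity)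
            exact (norm_sub_le _ _).trans (add_le_add_left (hfz.trans hCp) _)
        _ ≤ (|C| + ‖f 0‖) * ‖z‖ ^ n := by
            rw [inv_mul_le_iff₀ hzpos, pow_succ]
            have h1 : (1:ℝ) ≤ ‖z‖ ^ n * ‖z‖ := by nlinarith
            nlinarith [mul_le_mul_of_nonneg_left h1 (norm_nonneg (f 0))]
    obtain ⟨q, hq⟩ := ih g hg (|C| + ‖f 0‖) (max R 1) hgb
    refine ⟨Polynomial.C (f 0) + Polynomial.X * q, fun z => ?_⟩
    have hs := sub_smul_dslope f 0 z
    simp only [sub_zero, smul_eq_mul] at hs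
    rw [eval_add, eval_C, eval_mul, eval_X, ← hq]
    rw [← hgdef] at hs
    linear_combination -hs

lemma entire_inverse_affine {f g : ℂ → ℂ} (hf : Differentiable ℂ f) (hg : Differentiable ℂ g)
    (hgf : ∀ z, g (f z) = z) (hfg : ∀ z, f (g z) = z) :
    ∃ a b : ℂ, a ≠ 0 ∧ ∀ z, f z = a * z + b := by
  -- derivative of f never vanishes
  have hderiv : ∀ z, deriv g (f z) * deriv f z = 1 := by
    intro z
    have h1 : HasDerivAt (fun w => g (f w)) (deriv g (f z) * deriv f z) z :=
      ((hg (f z)).hasDerivAt).comp z ((hf z).hasDerivAt)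
    have h2 : HasDerivAt (fun w => g (f w)) 1 z := by
      have he : (fun w => g (f w)) = fun w => w := funext hgf
      rw [he]; exact hasDerivAt_id z
    exact h1.unique h2
  have hd0 : ∀ z, deriv f z ≠ 0 := by
    intro z h
    have := hderiv z
    rw [h, mul_zero] at this
    exact zero_ne_one this
  -- properness
  obtain ⟨M, hM⟩ : ∃ M : ℝ, ∀ w ∈ Metric.closedBall (f 0) 1, ‖g w‖ ≤ M := by
    obtain ⟨M, hM⟩ := (((isCompact_closedBall (f 0) 1).image hg.continuous).isBounded).subset_closedBall 0
    exact ⟨M, fun w hw => by simpa [Complex.dist_eq] using hM ⟨w, hw, rfl⟩⟩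
  set R : ℝ := max (M + 1) 1 with hRdef
  have hR1 : (1:ℝ) ≤ R := le_max_right _ _
  have hR0 : (0:ℝ) < R := lt_of_lt_of_le one_pos hR1
  have hprop : ∀ z : ℂ, R ≤ ‖z‖ → 1 ≤ ‖f z - f 0‖ := by
    intro z hz
    by_contra h
    push_neg at h
    have hzM : ‖z‖ ≤ M := by
      have := hM (f z) (by simpa [Metric.mem_closedBall, Complex.dist_eq] using h.le)
      rwa [hgf z] at this
    have : R ≤ M := le_trans hz hzM
    have : M + 1 ≤ M := le_trans (le_max_left _ _) this
    linarith
  -- removable singularity setup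
  set s : Set ℂ := Metric.ball 0 R⁻¹ with hsdef
  have hsnhds : s ∈ 𝓝 (0:ℂ) := Metric.ball_mem_nhds 0 (by positivity)
  set φ : ℂ → ℂ := fun z => (f z⁻¹ - f 0)⁻¹ with hφdef
  have hkey : ∀ z ∈ s \ {(0:ℂ)}, 1 ≤ ‖f z⁻¹ - f 0‖ := by
    rintro z ⟨hzs, hz0⟩
    have hz0' : z ≠ 0 := hz0
    have hzn : ‖z‖ < R⁻¹ := by simpa [hsdef, Complex.dist_eq] using hzs
    have hznpos : 0 < ‖z‖ := norm_pos_iff.mpr hz0'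
    have : R ≤ ‖z⁻¹‖ := by
      rw [norm_inv]
      rw [le_inv_comm₀ hR0 hznpos]
      exact hzn.le
    exact hprop _ this
  have hφd : DifferentiableOn ℂ φ (s \ {0}) := by
    intro z hz
    have hz0 : z ≠ 0 := hz.2
    have hne : f z⁻¹ - f 0 ≠ 0 := by
      intro h
      have := hkey z hz
      rw [h] at this; norm_num at this
    exact ((((hf (z⁻¹)).comp z (differentiableAt_inv hz0)).sub_const (f 0)).inv hne).differentiableWithinAt
  have hφbdd : BddAbove (norm ∘ φ '' (s \ {0})) := by
    refine ⟨1, ?_⟩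
    rintro - ⟨z, hz, rfl⟩
    have := hkey z hz
    simp only [Function.comp_apply, hφdef, norm_inv]
    exact inv_le_one_of_one_le₀ this
  set h : ℂ → ℂ := Function.update φ 0 (limUnder (𝓝[≠] 0) φ) with hhdef
  have hhd : DifferentiableOn ℂ h s :=
    Complex.differentiableOn_update_limUnder_of_bddAbove hsnhds hφd hφbdd
  have hha : AnalyticAt ℂ h 0 := hhd.analyticAt hsnhds
  have hhne : ∀ z ∈ s \ {(0:ℂ)}, h z ≠ 0 := by
    rintro z ⟨hzs, hz0⟩
    rw [hhdef, Function.update_of_ne hz0]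
    have := hkey z ⟨hzs, hz0⟩
    intro hc
    rw [hφdef] at hc
    simp only [inv_eq_zero] at hc
    rw [hc] at this; norm_num at this
  have horder : analyticOrderAt h 0 ≠ ⊤ := by
    intro hto
    have hev := (analyticOrderAt_eq_top).mp hto
    have h2 : ∀ᶠ z in 𝓝[≠] (0:ℂ), h z = 0 ∧ z ∈ s := by
      refine Filter.Eventually.and (hev.filter_mono nhdsWithin_le_nhds) ?_
      exact Filter.Eventually.filter_mono nhdsWithin_le_nhds hsnhds
    obtain ⟨z, hz1, hz2⟩ := (h2.and self_mem_nhdsWithin).exists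
    exact hhne z ⟨hz1.2, hz2⟩ hz1.1
  obtain ⟨n, hn⟩ : ∃ n : ℕ, analyticOrderAt h 0 = n := by
    cases hcase : analyticOrderAt h 0 with
    | top => exact absurd hcase horder
    | coe n => exact ⟨n, rfl⟩
  obtain ⟨u, hua, hu0, huev⟩ := (hha.analyticOrderAt_eq_natCast (n := n)).mp hn
  -- eventual lower bound on ‖u‖
  have huc : ContinuousAt u 0 := hua.continuousAt
  have hulb : ∀ᶠ z in 𝓝 (0:ℂ), ‖u 0‖ / 2 ≤ ‖u z‖ := by
    have : ∀ᶠ z in 𝓝 (0:ℂ), ‖u z - u 0‖ < ‖u 0‖ / 2 := by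
      have h0 : (0:ℝ) < ‖u 0‖ / 2 := by
        have : 0 < ‖u 0‖ := norm_pos_iff.mpr hu0
        linarith
      exact huc.tendsto.eventually (Metric.ball_mem_nhds _ h0) |>.mono (fun z hz => by
        simpa [Complex.dist_eq] using hz)
    exact this.mono fun z hz => by
      have := norm_sub_norm_le (u z) (u 0)
      have h2 := (abs_le.mp (abs_norm_sub_norm_le (u z) (u 0))).1
      linarith
  obtain ⟨r, hr0, hrball⟩ := Metric.eventually_nhds_iff_ball.mp ((huev.and hulb).and (Filter.eventually_mem_set.2 hsnhds))
  have hu0pos : (0:ℝ) < ‖u 0‖ := norm_pos_iff.mpr hu0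
  set C' : ℝ := ‖f 0‖ + 2 / ‖u 0‖ with hC'def
  set R' : ℝ := max (2 / r) 1 with hR'def
  have hgrow : ∀ w : ℂ, R' ≤ ‖w‖ → ‖f w‖ ≤ C' * ‖w‖ ^ n := by
    intro w hw
    have hw1 : (1:ℝ) ≤ ‖w‖ := le_trans (le_max_right _ _) hw
    have hwpos : (0:ℝ) < ‖w‖ := lt_of_lt_of_le one_pos hw1
    have hw0 : w ≠ 0 := by simpa [norm_pos_iff] using hwpos
    set z : ℂ := w⁻¹ with hzdef
    have hz0 : z ≠ 0 := inv_ne_zero hw0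
    have hzn : ‖z‖ = ‖w‖⁻¹ := norm_inv w
    have hzr : ‖z‖ < r := by
      rw [hzn]
      have h2r : 2 / r ≤ ‖w‖ := le_trans (le_max_left _ _) hw
      have h2rpos : (0:ℝ) < 2 / r := by positivity
      have := inv_anti₀ h2rpos h2r
      calc ‖w‖⁻¹ ≤ (2 / r)⁻¹ := this
        _ = r / 2 := by field_simp
        _ < r := by linarith
    have hball : z ∈ Metric.ball (0:ℂ) r := by
      simpa [Metric.mem_ball, Complex.dist_eq] using hzr
    obtain ⟨⟨heq, hub⟩, hzs⟩ := hrball z hball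
    have hzz : z⁻¹ = w := inv_inv w
    have hne : f w - f 0 ≠ 0 := by
      have := hkey z ⟨hzs, hz0⟩
      rw [hzz] at this
      intro hc; rw [hc] at this; norm_num at this
    have hhz : h z = (f w - f 0)⁻¹ := by
      rw [hhdef, Function.update_of_ne hz0, hφdef]
      simp only [hzz]
    have heq2 : (f w - f 0)⁻¹ = z ^ n * u z := by
      rw [← hhz]
      simpa [smul_eq_mul] using heq
    have huzne : u z ≠ 0 := by
      intro hc
      rw [hc, norm_zero] at hub
      linarith
    have hfineq : f w - f 0 = (z ^ n * u z)⁻¹ := by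
      rw [← heq2, inv_inv]
    have hnorm : ‖f w - f 0‖ = (‖z‖ ^ n * ‖u z‖)⁻¹ := by
      rw [hfineq, norm_inv, norm_mul, norm_pow]
    have hinvu : ‖u z‖⁻¹ ≤ 2 / ‖u 0‖ := by
      have h1 : (2 / ‖u 0‖)⁻¹ = ‖u 0‖ / 2 := by
        field_simp
      rw [inv_le_comm₀ (by linarith) (by positivity), h1]
      exact hub
    have hznpow : (‖z‖ ^ n)⁻¹ = ‖w‖ ^ n := by
      rw [hzn, ← inv_pow, inv_inv]
    have hsub : ‖f w - f 0‖ ≤ 2 / ‖u 0‖ * ‖w‖ ^ n := by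
      rw [hnorm, mul_inv, hznpow]
      have hwn : (0:ℝ) ≤ ‖w‖ ^ n := by positivity
      calc ‖w‖ ^ n * ‖u z‖⁻¹ ≤ ‖w‖ ^ n * (2 / ‖u 0‖) := by
            exact mul_le_mul_of_nonneg_left hinvu hwn
        _ = 2 / ‖u 0‖ * ‖w‖ ^ n := by ring
    have hpow1 : (1:ℝ) ≤ ‖w‖ ^ n := one_le_pow₀ hw1
    calc ‖f w‖ ≤ ‖f 0‖ + ‖f w - f 0‖ := norm_le_norm_add_norm_sub' (f w) (f 0)
      _ ≤ 2 / ‖u 0‖ * ‖w‖ ^ n + ‖f 0‖ := by linarith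
      _ ≤ C' * ‖w‖ ^ n := by
          rw [hC'def]
          have h0 : (0:ℝ) ≤ ‖f 0‖ := norm_nonneg _
          nlinarith
  obtain ⟨p, hp⟩ := growth_poly n f hf C' R' hgrow
  have hpe : ∀ z : ℂ, p.derivative.eval z = deriv f z := by
    intro z
    have hfe : f = fun w => p.eval w := funext hp
    rw [hfe]
    exact (Polynomial.deriv (p := p)).symm
  have hdle : p.derivative.degree ≤ 0 := by
    by_contra hdc
    push_neg at hdc
    obtain ⟨z0, hz0⟩ := Complex.exists_root hdc
    exact hd0 z0 (by rw [← hpe z0]; exact hz0)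
  have hnd : p.natDegree ≤ 1 := by
    by_contra hc
    push_neg at hc
    have hdd := Polynomial.degree_derivative_eq p (by omega)
    rw [hdd] at hdle
    have : (p.natDegree - 1 : ℕ) ≤ (0:ℕ) := by exact_mod_cast hdle
    omega
  have hXC := Polynomial.eq_X_add_C_of_degree_le_one
    (le_trans Polynomial.degree_le_natDegree (by exact_mod_cast hnd))
  refine ⟨p.coeff 1, p.coeff 0, ?_, ?_⟩
  · intro ha
    have hfe : f = fun _ => p.coeff 0 := by
      funext z
      rw [hp z]
      conv_lhs => rw [hXC]
      simp [ha]
    have : deriv f 0 = 0 := by rw [hfe]; simp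
    exact hd0 0 this
  · intro z
    rw [hp z]
    conv_lhs => rw [hXC]
    simp

/-- Every biholomorphism `F` of `𝔻 × ℂ` has the form
`F(z₁, z₂) = (ψ(z₁), A(z₁)·z₂ + B(z₁))` where `ψ` is a biholomorphism of the unit disc `𝔻`,
and `A, B : 𝔻 → ℂ` are holomorphic with `A` nowhere vanishing. -/
theorem automorphism_of_disc_times_plane (F G : ℂ × ℂ → ℂ × ℂ)
    (hF : DifferentiableOn ℂ F (Metric.ball (0 : ℂ) 1 ×ˢ (univ : Set ℂ)))
    (hFmaps : MapsTo F (Metric.ball (0 : ℂ) 1 ×ˢ (univ : Set ℂ))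
      (Metric.ball (0 : ℂ) 1 ×ˢ (univ : Set ℂ)))
    (hG : DifferentiableOn ℂ G (Metric.ball (0 : ℂ) 1 ×ˢ (univ : Set ℂ)))
    (hGmaps : MapsTo G (Metric.ball (0 : ℂ) 1 ×ˢ (univ : Set ℂ))
      (Metric.ball (0 : ℂ) 1 ×ˢ (univ : Set ℂ)))
    (hGF : ∀ p ∈ Metric.ball (0 : ℂ) 1 ×ˢ (univ : Set ℂ), G (F p) = p)
    (hFG : ∀ p ∈ Metric.ball (0 : ℂ) 1 ×ˢ (univ : Set ℂ), F (G p) = p) :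
    ∃ ψ A B : ℂ → ℂ,
      DifferentiableOn ℂ ψ (Metric.ball (0 : ℂ) 1) ∧
      MapsTo ψ (Metric.ball (0 : ℂ) 1) (Metric.ball (0 : ℂ) 1) ∧
      (∃ ψ' : ℂ → ℂ, DifferentiableOn ℂ ψ' (Metric.ball (0 : ℂ) 1) ∧
        MapsTo ψ' (Metric.ball (0 : ℂ) 1) (Metric.ball (0 : ℂ) 1) ∧
        (∀ z ∈ Metric.ball (0 : ℂ) 1, ψ' (ψ z) = z) ∧
        (∀ z ∈ Metric.ball (0 : ℂ) 1, ψ (ψ' z) = z)) ∧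
      DifferentiableOn ℂ A (Metric.ball (0 : ℂ) 1) ∧
      DifferentiableOn ℂ B (Metric.ball (0 : ℂ) 1) ∧
      (∀ z ∈ Metric.ball (0 : ℂ) 1, A z ≠ 0) ∧
      (∀ p ∈ Metric.ball (0 : ℂ) 1 ×ˢ (univ : Set ℂ),
        F p = (ψ p.1, A p.1 * p.2 + B p.1)) := by
  set D : Set ℂ := Metric.ball (0 : ℂ) 1 with hDdef
  set S : Set (ℂ × ℂ) := D ×ˢ (univ : Set ℂ) with hSdef
  have hSopen : IsOpen S := Metric.isOpen_ball.prod isOpen_univ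
  have hmemS : ∀ z w : ℂ, z ∈ D → (z, w) ∈ S := fun z w hz => ⟨hz, mem_univ _⟩
  have hFat : ∀ p ∈ S, DifferentiableAt ℂ F p := fun p hp =>
    (hF p hp).differentiableAt (hSopen.mem_nhds hp)
  have hGat : ∀ p ∈ S, DifferentiableAt ℂ G p := fun p hp =>
    (hG p hp).differentiableAt (hSopen.mem_nhds hp)
  -- slices
  have hFslice : ∀ z ∈ D, Differentiable ℂ (fun w => F (z, w)) := by
    intro z hz w
    exact (hFat (z, w) (hmemS z w hz)).comp w ((differentiableAt_const z).prodMk differentiableAt_id)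
  have hGslice : ∀ z ∈ D, Differentiable ℂ (fun w => G (z, w)) := by
    intro z hz w
    exact (hGat (z, w) (hmemS z w hz)).comp w ((differentiableAt_const z).prodMk differentiableAt_id)
  -- first components are constant in second variable (Liouville)
  have hconstF : ∀ z ∈ D, ∀ w : ℂ, (F (z, w)).1 = (F (z, 0)).1 := by
    intro z hz w
    have hd : Differentiable ℂ (fun w => (F (z, w)).1) := fun w => ((hFslice z hz) w).fst
    have hb : IsBounded (range fun w => (F (z, w)).1) := by
      refine (Metric.isBounded_ball (x := (0:ℂ)) (r := 1)).subset ?_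
      rintro - ⟨w, rfl⟩
      exact (hFmaps (hmemS z w hz)).1
    exact hd.apply_eq_apply_of_bounded hb w 0
  have hconstG : ∀ z ∈ D, ∀ w : ℂ, (G (z, w)).1 = (G (z, 0)).1 := by
    intro z hz w
    have hd : Differentiable ℂ (fun w => (G (z, w)).1) := fun w => ((hGslice z hz) w).fst
    have hb : IsBounded (range fun w => (G (z, w)).1) := by
      refine (Metric.isBounded_ball (x := (0:ℂ)) (r := 1)).subset ?_
      rintro - ⟨w, rfl⟩
      exact (hGmaps (hmemS z w hz)).1
    exact hd.apply_eq_apply_of_bounded hb w 0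
  set ψ : ℂ → ℂ := fun z => (F (z, 0)).1 with hψdef
  set ψ' : ℂ → ℂ := fun z => (G (z, 0)).1 with hψ'def
  set A : ℂ → ℂ := fun z => (F (z, 1)).2 - (F (z, 0)).2 with hAdef
  set B : ℂ → ℂ := fun z => (F (z, 0)).2 with hBdef
  have hψmem : ∀ z ∈ D, ψ z ∈ D := fun z hz => (hFmaps (hmemS z 0 hz)).1
  have hψ'mem : ∀ z ∈ D, ψ' z ∈ D := fun z hz => (hGmaps (hmemS z 0 hz)).1
  have hψd : DifferentiableOn ℂ ψ D := by
    intro z hz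
    exact (((hFat (z, 0) (hmemS z 0 hz)).comp z
      (differentiableAt_id.prodMk (differentiableAt_const 0))).fst).differentiableWithinAt
  have hψ'd : DifferentiableOn ℂ ψ' D := by
    intro z hz
    exact (((hGat (z, 0) (hmemS z 0 hz)).comp z
      (differentiableAt_id.prodMk (differentiableAt_const 0))).fst).differentiableWithinAt
  have hAd : DifferentiableOn ℂ A D := by
    intro z hz
    exact ((((hFat (z, 1) (hmemS z 1 hz)).comp z
      (differentiableAt_id.prodMk (differentiableAt_const 1))).snd).sub
      (((hFat (z, 0) (hmemS z 0 hz)).comp z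
      (differentiableAt_id.prodMk (differentiableAt_const 0))).snd)).differentiableWithinAt
  have hBd : DifferentiableOn ℂ B D := by
    intro z hz
    exact (((hFat (z, 0) (hmemS z 0 hz)).comp z
      (differentiableAt_id.prodMk (differentiableAt_const 0))).snd).differentiableWithinAt
  -- inverse identities for ψ
  have hψ'ψ : ∀ z ∈ D, ψ' (ψ z) = z := by
    intro z hz
    have h1 : ψ' (ψ z) = (G (ψ z, (F (z, 0)).2)).1 := by
      rw [hψ'def]
      exact (hconstG (ψ z) (hψmem z hz) (F (z, 0)).2).symm
    have h2 : ((ψ z : ℂ), (F (z, 0)).2) = F (z, 0) := by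
      rw [hψdef]
    rw [h1, h2, hGF (z, 0) (hmemS z 0 hz)]
  have hψψ' : ∀ z ∈ D, ψ (ψ' z) = z := by
    intro z hz
    have h1 : ψ (ψ' z) = (F (ψ' z, (G (z, 0)).2)).1 := by
      rw [hψdef]
      exact (hconstF (ψ' z) (hψ'mem z hz) (G (z, 0)).2).symm
    have h2 : ((ψ' z : ℂ), (G (z, 0)).2) = G (z, 0) := by
      rw [hψ'def]
    rw [h1, h2, hFG (z, 0) (hmemS z 0 hz)]
  -- fiberwise affine structure
  have hfiber : ∀ z ∈ D, ∃ a b : ℂ, a ≠ 0 ∧ ∀ w, (F (z, w)).2 = a * w + b := by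
    intro z hz
    set f : ℂ → ℂ := fun w => (F (z, w)).2 with hfdef
    set g : ℂ → ℂ := fun w => (G (ψ z, w)).2 with hgdef
    have hfd : Differentiable ℂ f := fun w => ((hFslice z hz) w).snd
    have hgd : Differentiable ℂ g := fun w => ((hGslice (ψ z) (hψmem z hz)) w).snd
    have hgf : ∀ w, g (f w) = w := by
      intro w
      have h1 : ((ψ z : ℂ), f w) = F (z, w) := by
        rw [hψdef, hfdef]
        exact Prod.ext (hconstF z hz w).symm rfl
      have h2 : g (f w) = (G (F (z, w))).2 := congrArg (fun q => (G q).2) h1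
      rw [h2, hGF (z, w) (hmemS z w hz)]
    have hfg : ∀ w, f (g w) = w := by
      intro w
      have h1 : ((z : ℂ), g w) = G (ψ z, w) := by
        refine Prod.ext ?_ rfl
        show z = (G (ψ z, w)).1
        rw [hconstG (ψ z) (hψmem z hz) w]
        exact (hψ'ψ z hz).symm
      have h2 : f (g w) = (F (G (ψ z, w))).2 := congrArg (fun q => (F q).2) h1
      rw [h2, hFG (ψ z, w) (hmemS (ψ z) w (hψmem z hz))]
    exact entire_inverse_affine hfd hgd hgf hfg
  refine ⟨ψ, A, B, hψd, fun z hz => hψmem z hz, ⟨ψ', hψ'd, fun z hz => hψ'mem z hz, hψ'ψ, hψψ'⟩,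
    hAd, hBd, ?_, ?_⟩
  · intro z hz
    obtain ⟨a, b, ha, hab⟩ := hfiber z hz
    have : A z = a := by
      rw [hAdef]
      simp only
      rw [hab 1, hab 0]
      ring
    rw [this]; exact ha
  · rintro ⟨z, w⟩ hp
    have hz : z ∈ D := hp.1
    obtain ⟨a, b, ha, hab⟩ := hfiber z hz
    have hA : A z = a := by
      rw [hAdef]; simp only; rw [hab 1, hab 0]; ring
    have hB : B z = b := by
      rw [hBdef]; simp only; rw [hab 0]; ring
    refine Prod.ext ?_ ?_
    · exact (hconstF z hz w)
    · simp only
      rw [hab w, hA, hB]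
end
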